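/- arXiv:2205.04789 — 2 statements merged into one kernel-verified Lean document; each statement's English description precedes it below -/
import Mathlib

section
/- Let E be a Banach space, T > 0 and 0 < α ≤ 1 < β. Let A : Δ₂ → E be a germ with ‖A‖_α < ∞ and ‖δA‖_β < ∞. Then there exists a function IA : [0,T] → E with (IA)_0 = 0 such that: (i) for every (s,t) ∈ Δ₂ and every sequence of partitions of [s,t] whose mesh tends to 0, the Riemann sums of A along these partitions converge to (IA)_t − (IA)_s; (ii) IA is α-Hölder continuous on [0,T]; and (iii) there is a constant c > 0 depending only on β such that ‖(IA)_t − (IA)_s − A_{s,t}‖_E ≤ c ‖δA‖_β |t−s|^β for all (s,t) ∈ Δ₂. -/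
open Filter

/-- A partition of the interval `[s, t]` into finitely many consecutive subintervals,
given by its (monotone) sequence of endpoints. -/
structure IntervalPartition (s t : ℝ) where
  n : ℕ
  pts : Fin (n + 1) → ℝ
  mono : Monotone pts
  first : pts 0 = s
  last : pts (Fin.last n) = t

/-- The mesh of a partition: the supremum of the lengths of its subintervals. -/
noncomputable def IntervalPartition.mesh {s t : ℝ} (P : IntervalPartition s t) : ℝ :=
  ⨆ i : Fin P.n, (P.pts i.succ - P.pts i.castSucc)

/-- The Riemann sum of a germ `A : Δ₂ → E` along a partition `P` of `[s, t]`: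
`∑_{[u,v] ∈ P} A_{u,v}`. -/
noncomputable def riemannSum {E : Type*} [NormedAddCommGroup E] {s t : ℝ}
    (A : ℝ → ℝ → E) (P : IntervalPartition s t) : E :=
  ∑ i : Fin P.n, A (P.pts i.castSucc) (P.pts i.succ)

open Finset

noncomputable def pSum {E : Type*} [NormedAddCommGroup E] (A : ℝ → ℝ → E) (q : ℕ → ℝ) (n : ℕ) : E :=
  ∑ k ∈ Finset.range n, A (q k) (q (k+1))

lemma steps_mono {γ : Type*} [Preorder γ] {q : ℕ → γ} {n : ℕ} (h : ∀ k < n, q k ≤ q (k+1)) :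
    ∀ i j, i ≤ j → j ≤ n → q i ≤ q j := by
  intro i j hij hjn
  induction j with
  | zero => simp_all
  | succ j ih =>
    rcases Nat.lt_or_ge i (j+1) with hl | hg
    · exact le_trans (ih (by omega) (by omega)) (h j (by omega))
    · have : i = j + 1 := by omega
      subst this; exact le_refl _

lemma pSum_remove {E : Type*} [NormedAddCommGroup E] (A : ℝ → ℝ → E) (q : ℕ → ℝ) (n i : ℕ)
    (hi : i + 1 ≤ n) :
    pSum A q (n+1) = pSum A (fun k => if k ≤ i then q k else q (k+1)) n
      + (A (q i) (q (i+1)) + A (q (i+1)) (q (i+2)) - A (q i) (q (i+2))) := by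
  classical
  set f : ℕ → E := fun k => A (q k) (q (k+1)) with hf
  set q' : ℕ → ℝ := fun k => if k ≤ i then q k else q (k+1) with hq'
  set g : ℕ → E := fun k => A (q' k) (q' (k+1)) with hg
  have h1 : pSum A q (n+1) = ∑ k ∈ range i, f k + (f i + (f (i+1) + ∑ k ∈ Ico (i+2) (n+1), f k)) := by
    rw [pSum, range_eq_Ico, ← Finset.sum_Ico_consecutive f (Nat.zero_le i) (by omega : i ≤ n+1),
      Finset.sum_eq_sum_Ico_succ_bot (by omega : i < n+1) f,
      Finset.sum_eq_sum_Ico_succ_bot (by omega : i+1 < n+1) f, ← range_eq_Ico]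
  have h2 : pSum A q' n = ∑ k ∈ range i, g k + (g i + ∑ k ∈ Ico (i+1) n, g k) := by
    rw [pSum, range_eq_Ico, ← Finset.sum_Ico_consecutive g (Nat.zero_le i) (by omega : i ≤ n),
      Finset.sum_eq_sum_Ico_succ_bot (by omega : i < n) g, ← range_eq_Ico]
  have e1 : ∀ k ∈ range i, g k = f k := by
    intro k hk
    rw [mem_range] at hk
    simp only [hg, hq', hf]
    rw [if_pos (by omega), if_pos (by omega)]
  have e2 : g i = A (q i) (q (i+2)) := by
    simp only [hg, hq']
    rw [if_pos (le_refl i), if_neg (by omega)]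
  have e3 : ∑ k ∈ Ico (i+1) n, g k = ∑ k ∈ Ico (i+2) (n+1), f k := by
    rw [Finset.sum_Ico_eq_sum_range, Finset.sum_Ico_eq_sum_range]
    have hc : n - (i+1) = n + 1 - (i+2) := by omega
    rw [← hc]
    apply Finset.sum_congr rfl
    intro k _
    simp only [hg, hq', hf]
    rw [if_neg (by omega), if_neg (by omega)]
    congr 2 <;> omega
  rw [h1, h2, Finset.sum_congr rfl e1, e2, e3]
  abel

noncomputable def Kpart (β : ℝ) (n : ℕ) : ℝ := ∑ k ∈ Finset.range n, (k : ℝ) ^ (-β)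

lemma maximal {E : Type*} [NormedAddCommGroup E] (A : ℝ → ℝ → E) (T β Cβ : ℝ)
    (hβ : 1 < β) (hCβ : 0 ≤ Cβ)
    (hA0 : ∀ t ∈ Set.Icc (0:ℝ) T, A t t = 0)
    (hδ : ∀ s u t : ℝ, 0 ≤ s → s ≤ u → u ≤ t → t ≤ T →
      ‖A s t - A s u - A u t‖ ≤ Cβ * (t - s) ^ β) :
    ∀ n : ℕ, ∀ q : ℕ → ℝ, (∀ k < n, q k ≤ q (k+1)) → 0 ≤ q 0 → q n ≤ T →
      ‖pSum A q n - A (q 0) (q n)‖ ≤ Cβ * 2 ^ β * Kpart β n * (q n - q 0) ^ β := by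
  intro n
  induction n using Nat.strong_induction_on with
  | _ n ih =>
  intro q hq h0 hT
  match n with
  | 0 =>
    have : A (q 0) (q 0) = 0 := hA0 (q 0) ⟨h0, hT⟩
    simp [pSum, this, Kpart]
  | 1 =>
    have : pSum A q 1 = A (q 0) (q 1) := by simp [pSum]
    have hk : Kpart β 1 = 0 := by
      simp [Kpart, Real.zero_rpow (by linarith : -β ≠ 0)]
    rw [this, sub_self, norm_zero, hk]
    simp
  | (m+2) =>
    -- choose minimizing i
    obtain ⟨i, hi_mem, hi_min⟩ := Finset.exists_min_image (range (m+1))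
      (fun i => q (i+2) - q i) (by simp)
    rw [mem_range] at hi_mem
    have hΔnn : ∀ a b, a ≤ b → b ≤ m+2 → 0 ≤ q b - q a := by
      intro a b hab hb; have := steps_mono hq a b hab hb; linarith
    set Δ : ℝ := q (m+2) - q 0 with hΔ
    have hΔ0 : 0 ≤ Δ := hΔnn 0 (m+2) (by omega) (le_refl _)
    -- pigeonhole
    have hsum : ∑ i' ∈ range (m+1), (q (i'+2) - q i') = (q (m+2) - q 1) + (q (m+1) - q 0) := by
      have : ∀ i' : ℕ, q (i'+2) - q i' = (q (i'+2) - q (i'+1)) + (q (i'+1) - q i') := by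
        intro i'; ring
      simp_rw [this]
      rw [Finset.sum_add_distrib, Finset.sum_range_sub (fun k => q (k+1)) (m+1),
        Finset.sum_range_sub q (m+1)]
    have hpig : ((m:ℝ)+1) * (q (i+2) - q i) ≤ 2 * Δ := by
      have h1 : (range (m+1)).card • (q (i+2) - q i) ≤ ∑ i' ∈ range (m+1), (q (i'+2) - q i') :=
        Finset.card_nsmul_le_sum _ _ _ (fun x hx => hi_min x hx)
      rw [Finset.card_range, nsmul_eq_mul, hsum] at h1
      push_cast at h1
      have g1 := hq 0 (by omega)
      have g2 := hq (m+1) (by omega)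
      nlinarith [h1]
    have hqi : q (i+2) - q i ≤ 2 * Δ / ((m:ℝ)+1) := by
      rw [le_div_iff₀ (by positivity : (0:ℝ) < (m:ℝ)+1)]
      nlinarith [hpig]
    -- remove point i+1
    have hrem := pSum_remove A q (m+1) i (by omega)
    set q' : ℕ → ℝ := fun k => if k ≤ i then q k else q (k+1) with hq'
    have hq'steps : ∀ k < m+1, q' k ≤ q' (k+1) := by
      intro k hk
      simp only [hq']
      rcases Nat.lt_or_ge k i with h | h
      · rw [if_pos (by omega), if_pos (by omega)]; exact hq k (by omega)
      rcases Nat.eq_or_lt_of_le h with h' | h'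
      · subst h'
        rw [if_pos (le_refl _), if_neg (by omega)]
        exact le_trans (hq i (by omega)) (hq (i+1) (by omega))
      · rw [if_neg (by omega), if_neg (by omega)]; exact hq (k+1) (by omega)
    have hq'0 : q' 0 = q 0 := by simp [hq']
    have hq'last : q' (m+1) = q (m+2) := by
      simp only [hq']; rw [if_neg (by omega)]
    have ihb := ih (m+1) (by omega) q' hq'steps (by rw [hq'0]; exact h0) (by rw [hq'last]; exact hT)
    rw [hq'0, hq'last] at ihb
    -- δ term
    have hq0i : 0 ≤ q i := le_trans h0 (steps_mono hq 0 i (by omega) (by omega))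
    have hqi2T : q (i+2) ≤ T := le_trans (steps_mono hq (i+2) (m+2) (by omega) (le_refl _)) hT
    have hδi := hδ (q i) (q (i+1)) (q (i+2)) hq0i (hq i (by omega)) (hq (i+1) (by omega)) hqi2T
    have hnorm : ‖A (q i) (q (i+1)) + A (q (i+1)) (q (i+2)) - A (q i) (q (i+2))‖
        = ‖A (q i) (q (i+2)) - A (q i) (q (i+1)) - A (q (i+1)) (q (i+2))‖ := by
      rw [← norm_neg]; congr 1; abel
    have hδbound : ‖A (q i) (q (i+1)) + A (q (i+1)) (q (i+2)) - A (q i) (q (i+2))‖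
        ≤ Cβ * (2 * Δ / ((m:ℝ)+1)) ^ β := by
      rw [hnorm]
      refine le_trans hδi ?_
      have := hΔnn i (i+2) (by omega) (by omega)
      gcongr
    -- assemble
    have htri : ‖pSum A q (m+2) - A (q 0) (q (m+2))‖
        ≤ ‖pSum A q' (m+1) - A (q 0) (q (m+2))‖
          + ‖A (q i) (q (i+1)) + A (q (i+1)) (q (i+2)) - A (q i) (q (i+2))‖ := by
      rw [hrem]
      have : pSum A q' (m+1) + (A (q i) (q (i+1)) + A (q (i+1)) (q (i+2)) - A (q i) (q (i+2)))
          - A (q 0) (q (m+2))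
          = (pSum A q' (m+1) - A (q 0) (q (m+2)))
            + (A (q i) (q (i+1)) + A (q (i+1)) (q (i+2)) - A (q i) (q (i+2))) := by abel
      rw [this]; exact norm_add_le _ _
    have hrpow : (2 * Δ / ((m:ℝ)+1)) ^ β = 2 ^ β * Δ ^ β * ((m:ℝ)+1) ^ (-β) := by
      rw [Real.div_rpow (by positivity) (by positivity), Real.mul_rpow (by norm_num) hΔ0,
        Real.rpow_neg (by positivity)]
      ring
    have hKpart : Kpart β (m+2) = Kpart β (m+1) + ((m:ℝ)+1) ^ (-β) := by
      rw [Kpart, Kpart, Finset.sum_range_succ]; push_cast; ring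
    calc ‖pSum A q (m+2) - A (q 0) (q (m+2))‖
        ≤ Cβ * 2 ^ β * Kpart β (m+1) * Δ ^ β + Cβ * (2 * Δ / ((m:ℝ)+1)) ^ β := by
          refine le_trans htri (add_le_add ihb hδbound)
      _ = Cβ * 2 ^ β * (Kpart β (m+1) + ((m:ℝ)+1) ^ (-β)) * Δ ^ β := by
          rw [hrpow]; ring
      _ = Cβ * 2 ^ β * Kpart β (m+2) * Δ ^ β := by rw [hKpart]

noncomputable def czero (β : ℝ) : ℝ := ∑' k : ℕ, (k : ℝ) ^ (-β)

noncomputable def KK (β : ℝ) : ℝ := 2 ^ β * czero β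

lemma czero_summable {β : ℝ} (hβ : 1 < β) : Summable (fun k : ℕ => (k : ℝ) ^ (-β)) :=
  Real.summable_nat_rpow.mpr (by linarith)

lemma czero_pos {β : ℝ} (hβ : 1 < β) : 0 < czero β := by
  have h1 : ((1:ℕ):ℝ) ^ (-β) ≤ czero β :=
    Summable.le_tsum (czero_summable hβ) 1 (fun j _ => Real.rpow_nonneg (Nat.cast_nonneg j) _)
  rw [Nat.cast_one, Real.one_rpow] at h1
  linarith

lemma KK_pos {β : ℝ} (hβ : 1 < β) : 0 < KK β :=
  mul_pos (Real.rpow_pos_of_pos (by norm_num) _) (czero_pos hβ)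

lemma Kpart_le_czero {β : ℝ} (hβ : 1 < β) (n : ℕ) : Kpart β n ≤ czero β :=
  Summable.sum_le_tsum (Finset.range n) (fun j _ => Real.rpow_nonneg (Nat.cast_nonneg j) _)
    (czero_summable hβ)

lemma maximal' {E : Type*} [NormedAddCommGroup E] (A : ℝ → ℝ → E) (T β Cβ : ℝ)
    (hβ : 1 < β) (hCβ : 0 ≤ Cβ)
    (hA0 : ∀ t ∈ Set.Icc (0:ℝ) T, A t t = 0)
    (hδ : ∀ s u t : ℝ, 0 ≤ s → s ≤ u → u ≤ t → t ≤ T →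
      ‖A s t - A s u - A u t‖ ≤ Cβ * (t - s) ^ β)
    (n : ℕ) (q : ℕ → ℝ) (hq : ∀ k < n, q k ≤ q (k+1)) (h0 : 0 ≤ q 0) (hT : q n ≤ T) :
      ‖pSum A q n - A (q 0) (q n)‖ ≤ Cβ * KK β * (q n - q 0) ^ β := by
  refine le_trans (maximal A T β Cβ hβ hCβ hA0 hδ n q hq h0 hT) ?_
  rw [KK, ← mul_assoc]
  have hΔ : 0 ≤ q n - q 0 := by
    have := steps_mono hq 0 n (Nat.zero_le n) (le_refl n); linarith
  have h2 : (0:ℝ) ≤ 2 ^ β := le_of_lt (Real.rpow_pos_of_pos (by norm_num) _)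
  gcongr
  exact Kpart_le_czero hβ n

lemma refine {E : Type*} [NormedAddCommGroup E] (A : ℝ → ℝ → E) (T β Cβ : ℝ)
    (hβ : 1 < β) (hCβ : 0 ≤ Cβ)
    (hA0 : ∀ t ∈ Set.Icc (0:ℝ) T, A t t = 0)
    (hδ : ∀ s u t : ℝ, 0 ≤ s → s ≤ u → u ≤ t → t ≤ T →
      ‖A s t - A s u - A u t‖ ≤ Cβ * (t - s) ^ β)
    (N : ℕ) (r : ℕ → ℝ) (hr : ∀ j < N, r j ≤ r (j+1)) (hr0 : 0 ≤ r 0) (hrN : r N ≤ T)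
    (n : ℕ) (φ : ℕ → ℕ) (hφm : ∀ k < n, φ k ≤ φ (k+1)) (hφ0 : φ 0 = 0) (hφn : φ n = N)
    (p : ℕ → ℝ) (hpr : ∀ k ≤ n, p k = r (φ k)) :
    ‖pSum A r N - pSum A p n‖ ≤ ∑ k ∈ Finset.range n, Cβ * KK β * (p (k+1) - p k) ^ β := by
  set f : ℕ → E := fun j => A (r j) (r (j+1)) with hf
  have hφle : ∀ k ≤ n, φ k ≤ N := by
    intro k hk; rw [← hφn]; exact steps_mono hφm k n hk (le_refl n)
  have block : ∀ M ≤ n, ∑ j ∈ range (φ M), f j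
      = ∑ k ∈ range M, ∑ j ∈ Ico (φ k) (φ (k+1)), f j := by
    intro M
    induction M with
    | zero => intro _; rw [hφ0]; simp
    | succ M ihM =>
      intro hM
      rw [Finset.sum_range_succ, ← ihM (by omega)]
      simp only [range_eq_Ico]
      exact (Finset.sum_Ico_consecutive f (Nat.zero_le (φ M)) (hφm M (by omega))).symm
  have hblock := block n (le_refl n)
  rw [hφn] at hblock
  have hsplit : pSum A r N - pSum A p n
      = ∑ k ∈ range n, ((∑ j ∈ Ico (φ k) (φ (k+1)), f j) - A (p k) (p (k+1))) := by
    rw [Finset.sum_sub_distrib, ← hblock, pSum, pSum]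
  rw [hsplit]
  refine le_trans (norm_sum_le _ _) (Finset.sum_le_sum ?_)
  intro k hk
  rw [mem_range] at hk
  set L : ℕ := φ (k+1) - φ k with hL
  set qk : ℕ → ℝ := fun j => r (φ k + j) with hqk
  have hφk1 : φ (k+1) ≤ N := hφle (k+1) (by omega)
  have hφkk : φ k ≤ φ (k+1) := hφm k hk
  have hinner : ∑ j ∈ Ico (φ k) (φ (k+1)), f j = pSum A qk L := by
    rw [Finset.sum_Ico_eq_sum_range, pSum]
    rfl
  have hqkL : qk L = r (φ (k+1)) := by
    simp only [hqk, hL]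
    congr 1
    omega
  have hqksteps : ∀ j < L, qk j ≤ qk (j+1) := by
    intro j hj
    simp only [hqk]
    have he : φ k + (j+1) = (φ k + j) + 1 := rfl
    rw [he]
    exact hr (φ k + j) (by omega)
  have hqk0 : qk 0 = r (φ k) := by simp [hqk]
  have h0' : 0 ≤ qk 0 := by
    rw [hqk0]; exact le_trans hr0 (steps_mono hr 0 (φ k) (Nat.zero_le _) (hφle k (by omega)))
  have hT' : qk L ≤ T := by
    rw [hqkL]; exact le_trans (steps_mono hr (φ (k+1)) N hφk1 (le_refl N)) hrN
  have hm := maximal' A T β Cβ hβ hCβ hA0 hδ L qk hqksteps h0' hT'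
  rw [hinner, hpr k (by omega), hpr (k+1) (by omega), ← hqk0, ← hqkL]
  exact hm

lemma exists_refinement (p q : ℕ → ℝ) (n m : ℕ)
    (hp : ∀ k < n, p k ≤ p (k+1)) (hq : ∀ k < m, q k ≤ q (k+1))
    (h0 : p 0 = q 0) (hn : p n = q m) :
    ∃ (N : ℕ) (r : ℕ → ℝ) (φ ψ : ℕ → ℕ),
      (∀ j < N, r j ≤ r (j+1)) ∧ (∀ k < n, φ k ≤ φ (k+1)) ∧ (∀ k < m, ψ k ≤ ψ (k+1)) ∧
      φ 0 = 0 ∧ ψ 0 = 0 ∧ φ n = N ∧ ψ m = N ∧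
      (∀ k ≤ n, p k = r (φ k)) ∧ (∀ k ≤ m, q k = r (ψ k)) := by
  classical
  set S : Finset ℝ := (Finset.range (n+1)).image p ∪ (Finset.range (m+1)).image q with hS
  set l : List ℝ := S.sort (· ≤ ·) with hl
  have hmemS : ∀ x ∈ l, x ∈ S := fun x hx => (Finset.mem_sort _).mp hx
  have hmemp : ∀ k ≤ n, p k ∈ l := by
    intro k hk
    rw [hl, Finset.mem_sort]
    exact Finset.mem_union_left _ (Finset.mem_image.mpr ⟨k, Finset.mem_range.mpr (by omega), rfl⟩)
  have hmemq : ∀ k ≤ m, q k ∈ l := by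
    intro k hk
    rw [hl, Finset.mem_sort]
    exact Finset.mem_union_right _ (Finset.mem_image.mpr ⟨k, Finset.mem_range.mpr (by omega), rfl⟩)
  have hsort : l.SortedLT := Finset.sortedLT_sort S
  have hlen : 1 ≤ l.length := by
    have := hmemp 0 (Nat.zero_le n)
    exact List.length_pos_iff.mpr (List.ne_nil_of_mem this)
  set N : ℕ := l.length - 1 with hN
  have hNlen : l.length = N + 1 := by omega
  have hlb : ∀ x ∈ l, p 0 ≤ x := by
    intro x hx
    rcases Finset.mem_union.mp (hmemS x hx) with h | h
    · obtain ⟨k, hk, rfl⟩ := Finset.mem_image.mp h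
      exact steps_mono hp 0 k (Nat.zero_le _) (Nat.lt_succ_iff.mp (Finset.mem_range.mp hk))
    · obtain ⟨k, hk, rfl⟩ := Finset.mem_image.mp h
      rw [h0]
      exact steps_mono hq 0 k (Nat.zero_le _) (Nat.lt_succ_iff.mp (Finset.mem_range.mp hk))
  have hub : ∀ x ∈ l, x ≤ p n := by
    intro x hx
    rcases Finset.mem_union.mp (hmemS x hx) with h | h
    · obtain ⟨k, hk, rfl⟩ := Finset.mem_image.mp h
      exact steps_mono hp k n (Nat.lt_succ_iff.mp (Finset.mem_range.mp hk)) (le_refl n)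
    · obtain ⟨k, hk, rfl⟩ := Finset.mem_image.mp h
      rw [hn]
      exact steps_mono hq k m (Nat.lt_succ_iff.mp (Finset.mem_range.mp hk)) (le_refl m)
  set r : ℕ → ℝ := fun j => l.getD j (p n) with hr
  have hget : ∀ j, (hj : j < l.length) → r j = l.get ⟨j, hj⟩ := by
    intro j hj
    rw [hr]
    exact List.getD_eq_get (l := l) (d := p n) ⟨j, hj⟩
  have hstrict : ∀ (a b : ℕ) (ha : a < l.length) (hb : b < l.length),
      a < b → l.get ⟨a, ha⟩ < l.get ⟨b, hb⟩ := by
    intro a b ha hb hab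
    exact hsort.strictMono_get (by exact hab : (⟨a, ha⟩ : Fin l.length) < ⟨b, hb⟩)
  have hrstrict : ∀ a b : ℕ, a < b → b < l.length → r a < r b := by
    intro a b hab hb
    rw [hget a (by omega), hget b hb]
    exact hsort.strictMono_get (show (⟨a, by omega⟩ : Fin l.length) < ⟨b, hb⟩ from hab)
  have hrmem : ∀ j, j < l.length → r j ∈ l := by
    intro j hj
    rw [hget j hj]
    exact l.get_mem _
  set φ : ℕ → ℕ := fun k => List.idxOf (p (min k n)) l with hφ
  set ψ : ℕ → ℕ := fun k => List.idxOf (q (min k m)) l with hψ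
  have hidxp : ∀ k ≤ n, φ k < l.length ∧ r (φ k) = p k := by
    intro k hk
    have hmem := hmemp k hk
    have h1 : φ k = List.idxOf (p k) l := by simp only [hφ]; rw [min_eq_left hk]
    have h2 : List.idxOf (p k) l < l.length := List.idxOf_lt_length_iff.mpr hmem
    refine ⟨by rw [h1]; exact h2, ?_⟩
    rw [h1, hget _ h2]
    exact List.idxOf_get h2
  have hidxq : ∀ k ≤ m, ψ k < l.length ∧ r (ψ k) = q k := by
    intro k hk
    have hmem := hmemq k hk
    have h1 : ψ k = List.idxOf (q k) l := by simp only [hψ]; rw [min_eq_left hk]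
    have h2 : List.idxOf (q k) l < l.length := List.idxOf_lt_length_iff.mpr hmem
    refine ⟨by rw [h1]; exact h2, ?_⟩
    rw [h1, hget _ h2]
    exact List.idxOf_get h2
  refine ⟨N, r, φ, ψ, ?_, ?_, ?_, ?_, ?_, ?_, ?_, ?_, ?_⟩
  · -- r steps
    intro j hj
    exact le_of_lt (hrstrict j (j+1) (by omega) (by omega))
  · -- φ steps
    intro k hk
    by_contra hcon
    push_neg at hcon
    have hlt := hrstrict (φ (k+1)) (φ k) hcon (hidxp k (by omega)).1
    rw [(hidxp k (by omega)).2, (hidxp (k+1) (by omega)).2] at hlt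
    exact absurd (hp k hk) (not_le.mpr hlt)
  · -- ψ steps
    intro k hk
    by_contra hcon
    push_neg at hcon
    have hlt := hrstrict (ψ (k+1)) (ψ k) hcon (hidxq k (by omega)).1
    rw [(hidxq k (by omega)).2, (hidxq (k+1) (by omega)).2] at hlt
    exact absurd (hq k hk) (not_le.mpr hlt)
  · -- φ 0 = 0
    by_contra hcon
    have h1 : 0 < φ 0 := Nat.pos_of_ne_zero hcon
    have hlt := hrstrict 0 (φ 0) h1 (hidxp 0 (Nat.zero_le n)).1
    rw [(hidxp 0 (Nat.zero_le n)).2] at hlt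
    exact absurd (hlb _ (hrmem 0 (by omega))) (not_le.mpr hlt)
  · -- ψ 0 = 0
    by_contra hcon
    have h1 : 0 < ψ 0 := Nat.pos_of_ne_zero hcon
    have hlt := hrstrict 0 (ψ 0) h1 (hidxq 0 (Nat.zero_le m)).1
    rw [(hidxq 0 (Nat.zero_le m)).2, ← h0] at hlt
    exact absurd (hlb _ (hrmem 0 (by omega))) (not_le.mpr hlt)
  · -- φ n = N
    have h1 := (hidxp n (le_refl n)).1
    by_contra hcon
    have h2 : φ n < N := by omega
    have hlt := hrstrict (φ n) N h2 (by omega)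
    rw [(hidxp n (le_refl n)).2] at hlt
    exact absurd (hub _ (hrmem N (by omega))) (not_le.mpr hlt)
  · -- ψ m = N
    have h1 := (hidxq m (le_refl m)).1
    by_contra hcon
    have h2 : ψ m < N := by omega
    have hlt := hrstrict (ψ m) N h2 (by omega)
    rw [(hidxq m (le_refl m)).2, ← hn] at hlt
    exact absurd (hub _ (hrmem N (by omega))) (not_le.mpr hlt)
  · exact fun k hk => ((hidxp k hk).2).symm
  · exact fun k hk => ((hidxq k hk).2).symm

lemma compare_sums {E : Type*} [NormedAddCommGroup E] (A : ℝ → ℝ → E) (T β Cβ : ℝ)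
    (hβ : 1 < β) (hCβ : 0 ≤ Cβ)
    (hA0 : ∀ t ∈ Set.Icc (0:ℝ) T, A t t = 0)
    (hδ : ∀ s u t : ℝ, 0 ≤ s → s ≤ u → u ≤ t → t ≤ T →
      ‖A s t - A s u - A u t‖ ≤ Cβ * (t - s) ^ β)
    (p q : ℕ → ℝ) (n m : ℕ)
    (hp : ∀ k < n, p k ≤ p (k+1)) (hq : ∀ k < m, q k ≤ q (k+1))
    (hp0 : 0 ≤ p 0) (hpT : p n ≤ T) (h0 : p 0 = q 0) (hn : p n = q m) :
    ‖pSum A p n - pSum A q m‖ ≤ Cβ * KK β *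
      ((∑ k ∈ Finset.range n, (p (k+1) - p k) ^ β) + ∑ k ∈ Finset.range m, (q (k+1) - q k) ^ β) := by
  obtain ⟨N, r, φ, ψ, hrsteps, hφsteps, hψsteps, hφ0, hψ0, hφn, hψm, hpr, hqr⟩ :=
    exists_refinement p q n m hp hq h0 hn
  have hr0 : 0 ≤ r 0 := by
    have := hpr 0 (Nat.zero_le n); rw [hφ0] at this; rw [← this]; exact hp0
  have hrN : r N ≤ T := by
    have := hpr n (le_refl n); rw [hφn] at this; rw [← this]; exact hpT
  have b1 := refine A T β Cβ hβ hCβ hA0 hδ N r hrsteps hr0 hrN n φ hφsteps hφ0 hφn p hpr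
  have b2 := refine A T β Cβ hβ hCβ hA0 hδ N r hrsteps hr0 hrN m ψ hψsteps hψ0 hψm q hqr
  have htri : ‖pSum A p n - pSum A q m‖
      ≤ ‖pSum A r N - pSum A p n‖ + ‖pSum A r N - pSum A q m‖ := by
    have h : pSum A p n - pSum A q m
        = (pSum A r N - pSum A q m) - (pSum A r N - pSum A p n) := by abel
    rw [h]
    exact le_trans (norm_sub_le _ _) (by rw [add_comm])
  refine le_trans htri ?_
  rw [mul_add]
  refine add_le_add (le_trans b1 ?_) (le_trans b2 ?_)
  · rw [Finset.mul_sum]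
  · rw [Finset.mul_sum]

noncomputable def unif (s t : ℝ) (n : ℕ) : ℕ → ℝ := fun k => s + (k:ℝ) * (t - s) / (n:ℝ)

lemma unif_zero (s t : ℝ) (n : ℕ) : unif s t n 0 = s := by simp [unif]

lemma unif_last (s t : ℝ) (n : ℕ) (hn : n ≠ 0) : unif s t n n = t := by
  have : (n:ℝ) ≠ 0 := Nat.cast_ne_zero.mpr hn
  simp only [unif]
  rw [mul_div_cancel_left₀ _ this]
  ring

lemma unif_step (s t : ℝ) (n : ℕ) (k : ℕ) :
    unif s t n (k+1) - unif s t n k = (t - s) / (n:ℝ) := by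
  simp only [unif]
  push_cast
  ring

lemma unif_steps (s t : ℝ) (n : ℕ) (hst : s ≤ t) : ∀ k < n, unif s t n k ≤ unif s t n (k+1) := by
  intro k _
  have h := unif_step s t n k
  have : 0 ≤ (t - s) / (n:ℝ) := div_nonneg (by linarith) (Nat.cast_nonneg n)
  linarith

lemma unif_energy (s t β : ℝ) (n : ℕ) (hst : s ≤ t) (hβ : 1 < β) :
    ∑ k ∈ Finset.range (n+1), (unif s t (n+1) (k+1) - unif s t (n+1) k) ^ β
      = (t - s) ^ β * ((n:ℝ)+1) ^ (1 - β) := by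
  have hc : ∀ k ∈ Finset.range (n+1), (unif s t (n+1) (k+1) - unif s t (n+1) k) ^ β
      = ((t - s) / ((n:ℝ)+1)) ^ β := by
    intro k _
    rw [unif_step]
    push_cast
    ring_nf
  rw [Finset.sum_congr rfl hc, Finset.sum_const, Finset.card_range, nsmul_eq_mul]
  have hn1 : (0:ℝ) < (n:ℝ)+1 := by positivity
  rw [Real.div_rpow (by linarith) (le_of_lt hn1)]
  have he : ((n:ℝ)+1) ^ (1 - β) = ((n:ℝ)+1) * ((n:ℝ)+1) ^ (-β) := by
    rw [sub_eq_add_neg, Real.rpow_add hn1, Real.rpow_one]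
  rw [he, Real.rpow_neg (le_of_lt hn1)]
  push_cast
  field_simp

noncomputable def uS {E : Type*} [NormedAddCommGroup E] (A : ℝ → ℝ → E) (s t : ℝ) (k : ℕ) : E :=
  pSum A (unif s t (k+1)) (k+1)

lemma uS_pair {E : Type*} [NormedAddCommGroup E] (A : ℝ → ℝ → E) (T β Cβ : ℝ)
    (hβ : 1 < β) (hCβ : 0 ≤ Cβ)
    (hA0 : ∀ t ∈ Set.Icc (0:ℝ) T, A t t = 0)
    (hδ : ∀ s u t : ℝ, 0 ≤ s → s ≤ u → u ≤ t → t ≤ T →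
      ‖A s t - A s u - A u t‖ ≤ Cβ * (t - s) ^ β)
    (s t : ℝ) (hs : 0 ≤ s) (hst : s ≤ t) (htT : t ≤ T) (n m : ℕ) :
    ‖uS A s t n - uS A s t m‖ ≤ Cβ * KK β * ((t-s)^β * ((n:ℝ)+1)^(1-β) + (t-s)^β * ((m:ℝ)+1)^(1-β)) := by
  have hcomp := compare_sums A T β Cβ hβ hCβ hA0 hδ (unif s t (n+1)) (unif s t (m+1)) (n+1) (m+1)
    (unif_steps s t (n+1) hst) (unif_steps s t (m+1) hst)
    (by rw [unif_zero]; exact hs) (by rw [unif_last s t (n+1) (by omega)]; exact htT)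
    (by rw [unif_zero, unif_zero]) (by rw [unif_last s t (n+1) (by omega), unif_last s t (m+1) (by omega)])
  rw [unif_energy s t β n hst hβ, unif_energy s t β m hst hβ] at hcomp
  exact hcomp

lemma aux_tendsto_pow (β : ℝ) (hβ : 1 < β) :
    Tendsto (fun N : ℕ => ((N:ℝ)+1) ^ (1-β)) atTop (nhds 0) := by
  have h1 : Tendsto (fun x : ℝ => x ^ (-(β-1))) atTop (nhds 0) :=
    tendsto_rpow_neg_atTop (by linarith)
  have h2 : Tendsto (fun N : ℕ => (N:ℝ)+1) atTop atTop :=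
    tendsto_atTop_add_const_right atTop 1 tendsto_natCast_atTop_atTop
  have h3 := h1.comp h2
  refine Tendsto.congr (fun N => ?_) h3
  simp only [Function.comp]
  congr 1
  ring

lemma uS_cauchy {E : Type*} [NormedAddCommGroup E] (A : ℝ → ℝ → E) (T β Cβ : ℝ)
    (hβ : 1 < β) (hCβ : 0 ≤ Cβ)
    (hA0 : ∀ t ∈ Set.Icc (0:ℝ) T, A t t = 0)
    (hδ : ∀ s u t : ℝ, 0 ≤ s → s ≤ u → u ≤ t → t ≤ T →
      ‖A s t - A s u - A u t‖ ≤ Cβ * (t - s) ^ β)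
    (s t : ℝ) (hs : 0 ≤ s) (hst : s ≤ t) (htT : t ≤ T) :
    CauchySeq (uS A s t) := by
  have hKB : 0 ≤ Cβ * KK β * (t-s)^β := by
    have := (KK_pos hβ).le
    have h2 : (0:ℝ) ≤ (t-s)^β := Real.rpow_nonneg (by linarith) _
    positivity
  refine cauchySeq_of_le_tendsto_0 (fun N => Cβ * KK β * (t-s)^β * (2 * ((N:ℝ)+1)^(1-β)))
    (fun n m N hNn hNm => ?_) ?_
  · rw [dist_eq_norm]
    refine le_trans (uS_pair A T β Cβ hβ hCβ hA0 hδ s t hs hst htT n m) ?_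
    have hmono : ∀ k : ℕ, N ≤ k → ((k:ℝ)+1)^(1-β) ≤ ((N:ℝ)+1)^(1-β) := by
      intro k hk
      apply Real.rpow_le_rpow_of_nonpos (by positivity)
      · push_cast; linarith [(Nat.cast_le (α := ℝ)).mpr hk]
      · linarith
    have h1 := hmono n hNn
    have h2 := hmono m hNm
    have e1 := mul_le_mul_of_nonneg_left h1 hKB
    have e2 := mul_le_mul_of_nonneg_left h2 hKB
    nlinarith [e1, e2]
  · have := (aux_tendsto_pow β hβ).const_mul (Cβ * KK β * (t-s)^β * 2)
    simp only [mul_zero] at this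
    convert this using 2 with N
    ring

noncomputable def intA {E : Type*} [NormedAddCommGroup E] [NormedSpace ℝ E] (A : ℝ → ℝ → E)
    (s t : ℝ) : E :=
  haveI : Nonempty E := ⟨0⟩
  limUnder atTop (uS A s t)

section main
variable {E : Type*} [NormedAddCommGroup E] [NormedSpace ℝ E] [CompleteSpace E]
variable (A : ℝ → ℝ → E) (T β Cβ : ℝ)

lemma uS_tendsto (hβ : 1 < β) (hCβ : 0 ≤ Cβ)
    (hA0 : ∀ t ∈ Set.Icc (0:ℝ) T, A t t = 0)
    (hδ : ∀ s u t : ℝ, 0 ≤ s → s ≤ u → u ≤ t → t ≤ T →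
      ‖A s t - A s u - A u t‖ ≤ Cβ * (t - s) ^ β)
    (s t : ℝ) (hs : 0 ≤ s) (hst : s ≤ t) (htT : t ≤ T) :
    Tendsto (uS A s t) atTop (nhds (intA A s t)) := by
  haveI : Nonempty E := ⟨0⟩
  exact (uS_cauchy A T β Cβ hβ hCβ hA0 hδ s t hs hst htT).tendsto_limUnder

lemma intA_sub_A (hβ : 1 < β) (hCβ : 0 ≤ Cβ)
    (hA0 : ∀ t ∈ Set.Icc (0:ℝ) T, A t t = 0)
    (hδ : ∀ s u t : ℝ, 0 ≤ s → s ≤ u → u ≤ t → t ≤ T →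
      ‖A s t - A s u - A u t‖ ≤ Cβ * (t - s) ^ β)
    (s t : ℝ) (hs : 0 ≤ s) (hst : s ≤ t) (htT : t ≤ T) :
    ‖intA A s t - A s t‖ ≤ Cβ * KK β * (t - s) ^ β := by
  have h1 : Tendsto (fun n => ‖uS A s t n - A s t‖) atTop (nhds ‖intA A s t - A s t‖) :=
    ((uS_tendsto A T β Cβ hβ hCβ hA0 hδ s t hs hst htT).sub tendsto_const_nhds).norm
  refine le_of_tendsto h1 (Eventually.of_forall fun n => ?_)
  have hm := maximal' A T β Cβ hβ hCβ hA0 hδ (n+1) (unif s t (n+1))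
    (unif_steps s t (n+1) hst)
    (by rw [unif_zero]; exact hs)
    (by rw [unif_last s t (n+1) (by omega)]; exact htT)
  rw [unif_zero, unif_last s t (n+1) (by omega)] at hm
  exact hm

lemma pSum_near_intA (hβ : 1 < β) (hCβ : 0 ≤ Cβ)
    (hA0 : ∀ t ∈ Set.Icc (0:ℝ) T, A t t = 0)
    (hδ : ∀ s u t : ℝ, 0 ≤ s → s ≤ u → u ≤ t → t ≤ T →
      ‖A s t - A s u - A u t‖ ≤ Cβ * (t - s) ^ β)
    (s t : ℝ) (hs : 0 ≤ s) (hst : s ≤ t) (htT : t ≤ T)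
    (p : ℕ → ℝ) (n : ℕ) (hp : ∀ k < n, p k ≤ p (k+1)) (hp0 : p 0 = s) (hpn : p n = t)
    (M : ℝ) (hM : 0 ≤ M) (hstep : ∀ k < n, p (k+1) - p k ≤ M) :
    ‖pSum A p n - intA A s t‖ ≤ Cβ * KK β * (M ^ (β-1) * (t - s)) := by
  have henergy : ∑ k ∈ Finset.range n, (p (k+1) - p k) ^ β ≤ M ^ (β-1) * (t - s) := by
    have per : ∀ k ∈ Finset.range n, (p (k+1) - p k) ^ β ≤ M ^ (β-1) * (p (k+1) - p k) := by
      intro k hk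
      rw [Finset.mem_range] at hk
      have hΔ : 0 ≤ p (k+1) - p k := by have := hp k hk; linarith
      rcases eq_or_lt_of_le hΔ with h | h
      · rw [← h, Real.zero_rpow (by linarith)]
        simp
      · have he := Real.rpow_add h (β-1) 1
        rw [sub_add_cancel, Real.rpow_one] at he
        rw [he]
        exact mul_le_mul_of_nonneg_right
          (Real.rpow_le_rpow hΔ (hstep k hk) (by linarith)) hΔ
    refine le_trans (Finset.sum_le_sum per) ?_
    rw [← Finset.mul_sum, Finset.sum_range_sub p n, hp0, hpn]
  have key : ∀ m : ℕ, ‖pSum A p n - uS A s t m‖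
      ≤ Cβ * KK β * (M ^ (β-1) * (t-s)) + Cβ * KK β * ((t-s)^β * ((m:ℝ)+1)^(1-β)) := by
    intro m
    have hcomp := compare_sums A T β Cβ hβ hCβ hA0 hδ p (unif s t (m+1)) n (m+1)
      hp (unif_steps s t (m+1) hst)
      (by rw [hp0]; exact hs) (by rw [hpn]; exact htT)
      (by rw [hp0, unif_zero]) (by rw [hpn, unif_last s t (m+1) (by omega)])
    rw [unif_energy s t β m hst hβ] at hcomp
    refine le_trans hcomp ?_
    rw [mul_add]
    gcongr
    exact mul_nonneg hCβ (KK_pos hβ).le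
  have h1 : Tendsto (fun m => ‖pSum A p n - uS A s t m‖) atTop
      (nhds ‖pSum A p n - intA A s t‖) :=
    (tendsto_const_nhds.sub (uS_tendsto A T β Cβ hβ hCβ hA0 hδ s t hs hst htT)).norm
  have h2 : Tendsto (fun m : ℕ => Cβ * KK β * (M ^ (β-1) * (t-s))
      + Cβ * KK β * ((t-s)^β * ((m:ℝ)+1)^(1-β))) atTop
      (nhds (Cβ * KK β * (M ^ (β-1) * (t-s)) + 0)) := by
    refine Tendsto.add tendsto_const_nhds ?_
    have := ((aux_tendsto_pow β hβ).const_mul (Cβ * KK β * (t-s)^β))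
    simp only [mul_zero] at this
    refine Tendsto.congr (fun m => by ring) this
  have := le_of_tendsto_of_tendsto' h1 h2 key
  simpa using this

end main

lemma pSum_concat {E : Type*} [NormedAddCommGroup E] (A : ℝ → ℝ → E)
    (p q : ℕ → ℝ) (n m : ℕ) (hjoin : p n = q 0) :
    pSum A (fun j => if j < n then p j else q (j - n)) (n + m)
      = pSum A p n + pSum A q m := by
  set r : ℕ → ℝ := fun j => if j < n then p j else q (j - n) with hrdef
  have hr1 : ∀ j ≤ n, r j = p j := by
    intro j hj
    simp only [hrdef]
    rcases Nat.lt_or_ge j n with h | h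
    · rw [if_pos h]
    · have : j = n := by omega
      subst this
      rw [if_neg (by omega), Nat.sub_self, ← hjoin]
  have hr2 : ∀ j : ℕ, r (n + j) = q j := by
    intro j
    simp only [hrdef]
    rcases Nat.eq_zero_or_pos j with h | h
    · subst h
      rw [if_neg (by omega), Nat.add_sub_cancel_left, ← hjoin]
    · rw [if_neg (by omega), Nat.add_sub_cancel_left]
  have hsplit : pSum A r (n + m)
      = ∑ j ∈ Finset.range n, A (r j) (r (j+1)) + ∑ j ∈ Finset.Ico n (n+m), A (r j) (r (j+1)) := by
    rw [pSum, range_eq_Ico, ← Finset.sum_Ico_consecutive _ (Nat.zero_le n) (by omega : n ≤ n + m),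
      ← range_eq_Ico]
  rw [hsplit]
  congr 1
  · rw [pSum]
    refine Finset.sum_congr rfl (fun j hj => ?_)
    rw [Finset.mem_range] at hj
    rw [hr1 j (by omega), hr1 (j+1) (by omega)]
  · rw [pSum, Finset.sum_Ico_eq_sum_range]
    have hc : n + m - n = m := by omega
    rw [hc]
    refine Finset.sum_congr rfl (fun j hj => ?_)
    have e1 : r (n + j) = q j := hr2 j
    have e2 : r (n + j + 1) = q (j + 1) := by
      have : n + j + 1 = n + (j + 1) := by omega
      rw [this, hr2 (j+1)]
    rw [e1, e2]

section main2
variable {E : Type*} [NormedAddCommGroup E] [NormedSpace ℝ E] [CompleteSpace E]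
variable (A : ℝ → ℝ → E) (T β Cβ : ℝ)

lemma intA_self (hβ : 1 < β) (hCβ : 0 ≤ Cβ)
    (hA0 : ∀ t ∈ Set.Icc (0:ℝ) T, A t t = 0)
    (hδ : ∀ s u t : ℝ, 0 ≤ s → s ≤ u → u ≤ t → t ≤ T →
      ‖A s t - A s u - A u t‖ ≤ Cβ * (t - s) ^ β)
    (s : ℝ) (hs : 0 ≤ s) (hsT : s ≤ T) : intA A s s = 0 := by
  have h := intA_sub_A A T β Cβ hβ hCβ hA0 hδ s s hs (le_refl s) hsT
  rw [sub_self, Real.zero_rpow (by linarith), mul_zero, hA0 s ⟨hs, hsT⟩, sub_zero] at h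
  exact norm_le_zero_iff.mp h

lemma intA_add (hβ : 1 < β) (hCβ : 0 ≤ Cβ)
    (hA0 : ∀ t ∈ Set.Icc (0:ℝ) T, A t t = 0)
    (hδ : ∀ s u t : ℝ, 0 ≤ s → s ≤ u → u ≤ t → t ≤ T →
      ‖A s t - A s u - A u t‖ ≤ Cβ * (t - s) ^ β)
    (s u t : ℝ) (hs : 0 ≤ s) (hsu : s ≤ u) (hut : u ≤ t) (htT : t ≤ T) :
    intA A s t = intA A s u + intA A u t := by
  have hst : s ≤ t := le_trans hsu hut
  set w : ℕ → E := fun k => uS A s u k + uS A u t k with hw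
  have hw1 : Tendsto w atTop (nhds (intA A s u + intA A u t)) :=
    (uS_tendsto A T β Cβ hβ hCβ hA0 hδ s u hs hsu (le_trans hut htT)).add
      (uS_tendsto A T β Cβ hβ hCβ hA0 hδ u t (le_trans hs hsu) hut htT)
  have hw2 : Tendsto w atTop (nhds (intA A s t)) := by
    rw [tendsto_iff_norm_sub_tendsto_zero]
    have hbound : ∀ k : ℕ, ‖w k - intA A s t‖
        ≤ Cβ * KK β * (((t - s) / ((k:ℝ)+1)) ^ (β-1) * (t - s)) := by
      intro k
      have hk1 : (0:ℝ) < (k:ℝ)+1 := by positivity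
      set rk : ℕ → ℝ := fun j => if j < k+1 then unif s u (k+1) j else unif u t (k+1) (j - (k+1))
        with hrk
      have hcat := pSum_concat A (unif s u (k+1)) (unif u t (k+1)) (k+1) (k+1)
        (by rw [unif_last s u (k+1) (by omega), unif_zero])
      have hwk : w k = pSum A rk ((k+1) + (k+1)) := by
        simp only [hw, uS]
        rw [hrk]
        exact hcat.symm
      have hr1 : ∀ j ≤ k+1, rk j = unif s u (k+1) j := by
        intro j hj
        simp only [hrk]
        rcases Nat.lt_or_ge j (k+1) with h | h
        · rw [if_pos h]
        · have : j = k+1 := by omega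
          subst this
          rw [if_neg (by omega), Nat.sub_self, unif_zero, unif_last s u (k+1) (by omega)]
      have hr2 : ∀ j : ℕ, rk ((k+1) + j) = unif u t (k+1) j := by
        intro j
        simp only [hrk]
        rcases Nat.eq_zero_or_pos j with h | h
        · subst h
          rw [if_neg (by omega), Nat.add_sub_cancel_left]
        · rw [if_neg (by omega), Nat.add_sub_cancel_left]
      have hsteps : ∀ j < (k+1) + (k+1), rk j ≤ rk (j+1) ∧ rk (j+1) - rk j ≤ (t-s)/((k:ℝ)+1) := by
        intro j hj
        rcases Nat.lt_or_ge j (k+1) with h | h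
        · have e1 : rk j = unif s u (k+1) j := hr1 j (by omega)
          have e2 : rk (j+1) = unif s u (k+1) (j+1) := hr1 (j+1) (by omega)
          have hstp := unif_step s u (k+1) j
          push_cast at hstp
          have hnn : (0:ℝ) ≤ (u - s) / ((k:ℝ)+1) := div_nonneg (by linarith) hk1.le
          constructor
          · rw [e1, e2]; linarith
          · rw [e1, e2, hstp]
            gcongr
        · have e1 : rk j = unif u t (k+1) (j - (k+1)) := by
            have h' := hr2 (j - (k+1))
            rw [show (k+1) + (j - (k+1)) = j by omega] at h'
            exact h'
          have e2 : rk (j+1) = unif u t (k+1) (j - (k+1) + 1) := by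
            have h' := hr2 (j - (k+1) + 1)
            rw [show (k+1) + (j - (k+1) + 1) = j + 1 by omega] at h'
            exact h'
          have hstp := unif_step u t (k+1) (j - (k+1))
          push_cast at hstp
          have hnn : (0:ℝ) ≤ (t - u) / ((k:ℝ)+1) := div_nonneg (by linarith) hk1.le
          constructor
          · rw [e1, e2]; linarith
          · rw [e1, e2, hstp]
            gcongr
      have hnear := pSum_near_intA A T β Cβ hβ hCβ hA0 hδ s t hs hst htT
        rk ((k+1) + (k+1)) (fun j hj => (hsteps j hj).1)
        (by rw [hr1 0 (by omega), unif_zero])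
        (by rw [hr2 (k+1), unif_last u t (k+1) (by omega)])
        ((t-s)/((k:ℝ)+1)) (div_nonneg (by linarith) hk1.le)
        (fun j hj => (hsteps j hj).2)
      rw [hwk]
      exact hnear
    have hM0 : Tendsto (fun k : ℕ => (t-s)/((k:ℝ)+1)) atTop (nhds 0) :=
      Tendsto.div_atTop tendsto_const_nhds
        (tendsto_atTop_add_const_right atTop 1 tendsto_natCast_atTop_atTop)
    have hrp : Tendsto (fun k : ℕ => ((t-s)/((k:ℝ)+1)) ^ (β-1)) atTop (nhds 0) := by
      have hc : ContinuousAt (fun x : ℝ => x ^ (β-1)) 0 :=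
        Real.continuousAt_rpow_const 0 (β-1) (Or.inr (by linarith))
      have h' := hc.tendsto.comp hM0
      rwa [Real.zero_rpow (by linarith : β - 1 ≠ 0)] at h'
    have hrhs : Tendsto (fun k : ℕ => Cβ * KK β * (((t-s)/((k:ℝ)+1)) ^ (β-1) * (t-s)))
        atTop (nhds 0) := by
      have h' := (hrp.const_mul (Cβ * KK β)).mul_const (t-s)
      simp only [mul_zero, zero_mul] at h'
      refine Tendsto.congr (fun k => by ring) h'
    exact squeeze_zero (fun k => norm_nonneg _) hbound hrhs
  exact tendsto_nhds_unique hw2 hw1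

end main2

noncomputable def ptsSeq {s t : ℝ} (P : IntervalPartition s t) : ℕ → ℝ :=
  fun j => P.pts ⟨min j P.n, Nat.lt_succ_of_le (min_le_right _ _)⟩

lemma ptsSeq_eq {s t : ℝ} (P : IntervalPartition s t) (j : ℕ) (hj : j ≤ P.n) :
    ptsSeq P j = P.pts ⟨j, by omega⟩ := by
  rw [ptsSeq]
  congr 1
  ext
  simp [min_eq_left hj]

lemma ptsSeq_zero {s t : ℝ} (P : IntervalPartition s t) : ptsSeq P 0 = s := by
  rw [ptsSeq_eq P 0 (Nat.zero_le _), Fin.mk_zero, P.first]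

lemma ptsSeq_last {s t : ℝ} (P : IntervalPartition s t) : ptsSeq P P.n = t := by
  rw [ptsSeq_eq P P.n (le_refl _)]
  have h : (⟨P.n, by omega⟩ : Fin (P.n+1)) = Fin.last P.n := rfl
  rw [h, P.last]

lemma ptsSeq_steps {s t : ℝ} (P : IntervalPartition s t) : ∀ k < P.n, ptsSeq P k ≤ ptsSeq P (k+1) := by
  intro k hk
  rw [ptsSeq_eq P k (by omega), ptsSeq_eq P (k+1) (by omega)]
  exact P.mono (by simp [Fin.le_def])

lemma ptsSeq_step_le_mesh {s t : ℝ} (P : IntervalPartition s t) :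
    ∀ k < P.n, ptsSeq P (k+1) - ptsSeq P k ≤ P.mesh := by
  intro k hk
  rw [ptsSeq_eq P k (by omega), ptsSeq_eq P (k+1) (by omega), IntervalPartition.mesh]
  have hb : BddAbove (Set.range (fun i : Fin P.n => P.pts i.succ - P.pts i.castSucc)) :=
    (Set.finite_range _).bddAbove
  exact le_ciSup hb ⟨k, hk⟩

lemma mesh_nonneg {s t : ℝ} (P : IntervalPartition s t) : 0 ≤ P.mesh := by
  rcases Nat.eq_zero_or_pos P.n with h | h
  · rw [IntervalPartition.mesh]
    have : IsEmpty (Fin P.n) := by rw [h]; exact Fin.isEmpty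
    rw [Real.iSup_of_isEmpty]
  · have h1 := ptsSeq_steps P 0 h
    have h2 := ptsSeq_step_le_mesh P 0 h
    linarith

lemma riemannSum_eq_pSum {E : Type*} [NormedAddCommGroup E] (A : ℝ → ℝ → E) {s t : ℝ}
    (P : IntervalPartition s t) : riemannSum A P = pSum A (ptsSeq P) P.n := by
  rw [riemannSum, pSum, ← Fin.sum_univ_eq_sum_range (fun j => A (ptsSeq P j) (ptsSeq P (j+1)))]
  refine Finset.sum_congr rfl (fun i _ => ?_)
  have h1 : ptsSeq P (i : ℕ) = P.pts i.castSucc := by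
    rw [ptsSeq_eq P i (le_of_lt i.isLt)]
    congr 1
  have h2 : ptsSeq P ((i : ℕ) + 1) = P.pts i.succ := by
    rw [ptsSeq_eq P ((i:ℕ)+1) i.isLt]
    congr 1
  rw [h1, h2]

/-- **The Sewing Lemma.** Let `E` be a Banach space, `T > 0` and `0 < α ≤ 1 < β`.
There is a constant `c > 0` (depending only on `β`, and on the ambient fixed data) such
that for every germ `A : Δ₂ → E` with `‖A‖_α < ∞` (witnessed by `Cα`) and
`‖δA‖_β < ∞` (witnessed by `Cβ`), there exists `IA : [0,T] → E` with `IA 0 = 0` such that: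
(i) for every `(s,t) ∈ Δ₂`, the Riemann sums of `A` along any sequence of partitions of
`[s,t]` whose mesh tends to `0` converge to `IA t - IA s`;
(ii) `IA` is `α`-Hölder continuous on `[0,T]`;
(iii) `‖IA t - IA s - A s t‖ ≤ c * Cβ * (t-s)^β` on `Δ₂`. -/
theorem sewing_lemma {E : Type*} [NormedAddCommGroup E] [NormedSpace ℝ E] [CompleteSpace E]
    (T : ℝ) (hT : 0 < T) (α β : ℝ) (hα : 0 < α) (hα1 : α ≤ 1) (hβ : 1 < β) :
    ∃ c : ℝ, 0 < c ∧
      ∀ A : ℝ → ℝ → E,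
        (∀ t ∈ Set.Icc (0 : ℝ) T, A t t = 0) →
        ∀ Cα : ℝ, (∀ s t : ℝ, 0 ≤ s → s ≤ t → t ≤ T → ‖A s t‖ ≤ Cα * (t - s) ^ α) →
        ∀ Cβ : ℝ,
          (∀ s u t : ℝ, 0 ≤ s → s ≤ u → u ≤ t → t ≤ T →
            ‖A s t - A s u - A u t‖ ≤ Cβ * (t - s) ^ β) →
        ∃ IA : ℝ → E,
          IA 0 = 0 ∧
          (∀ s t : ℝ, 0 ≤ s → s ≤ t → t ≤ T →
            ∀ P : ℕ → IntervalPartition s t,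
              Tendsto (fun k => (P k).mesh) atTop (nhds 0) →
              Tendsto (fun k => riemannSum A (P k)) atTop (nhds (IA t - IA s))) ∧
          (∃ CH : ℝ, ∀ s t : ℝ, 0 ≤ s → s ≤ t → t ≤ T →
            ‖IA t - IA s‖ ≤ CH * (t - s) ^ α) ∧
          (∀ s t : ℝ, 0 ≤ s → s ≤ t → t ≤ T →
            ‖IA t - IA s - A s t‖ ≤ c * Cβ * (t - s) ^ β) := by
  refine ⟨KK β, KK_pos hβ, ?_⟩
  intro A hA0 Cα hCα Cβ hδ
  have hCβ : 0 ≤ Cβ := by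
    have h := hδ 0 0 T (le_refl 0) (le_refl 0) hT.le (le_refl T)
    rw [hA0 0 ⟨le_refl 0, hT.le⟩, sub_zero, sub_self, norm_zero] at h
    have hTβ : 0 < (T - 0) ^ β := Real.rpow_pos_of_pos (by linarith) β
    by_contra hneg
    push_neg at hneg
    nlinarith
  have hIA : ∀ s t : ℝ, 0 ≤ s → s ≤ t → t ≤ T → intA A 0 t - intA A 0 s = intA A s t := by
    intro s t hs hst htT
    rw [intA_add A T β Cβ hβ hCβ hA0 hδ 0 s t (le_refl 0) hs hst htT]
    abel
  refine ⟨fun x => intA A 0 x, ?_, ?_, ?_, ?_⟩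
  · exact intA_self A T β Cβ hβ hCβ hA0 hδ 0 (le_refl 0) hT.le
  · -- (i) Riemann sums converge
    intro s t hs hst htT P hmesh
    have heq := hIA s t hs hst htT
    simp only []
    rw [heq, tendsto_iff_norm_sub_tendsto_zero]
    have hb : ∀ k, ‖riemannSum A (P k) - intA A s t‖
        ≤ Cβ * KK β * ((max (P k).mesh 0) ^ (β-1) * (t - s)) := by
      intro k
      rw [riemannSum_eq_pSum]
      exact pSum_near_intA A T β Cβ hβ hCβ hA0 hδ s t hs hst htT (ptsSeq (P k)) (P k).n
        (ptsSeq_steps _) (ptsSeq_zero _) (ptsSeq_last _) (max (P k).mesh 0) (le_max_right _ _)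
        (fun j hj => le_trans (ptsSeq_step_le_mesh _ j hj) (le_max_left _ _))
    have hM : Tendsto (fun k => max (P k).mesh 0) atTop (nhds 0) := by
      have := hmesh.max (tendsto_const_nhds (x := (0:ℝ)) (f := atTop))
      simpa using this
    have hrp : Tendsto (fun k => (max (P k).mesh 0) ^ (β-1)) atTop (nhds 0) := by
      have hc : ContinuousAt (fun x : ℝ => x ^ (β-1)) 0 :=
        Real.continuousAt_rpow_const 0 (β-1) (Or.inr (by linarith))
      have h' := hc.tendsto.comp hM
      rwa [Real.zero_rpow (by linarith : β - 1 ≠ 0)] at h'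
    have hrhs : Tendsto (fun k => Cβ * KK β * ((max (P k).mesh 0) ^ (β-1) * (t - s)))
        atTop (nhds 0) := by
      have h' := (hrp.const_mul (Cβ * KK β)).mul_const (t-s)
      simp only [mul_zero, zero_mul] at h'
      refine Tendsto.congr (fun k => by ring) h'
    exact squeeze_zero (fun k => norm_nonneg _) hb hrhs
  · -- (ii) Hölder bound
    refine ⟨Cα + Cβ * KK β * T ^ (β-α), ?_⟩
    intro s t hs hst htT
    simp only []
    rw [hIA s t hs hst htT]
    rcases eq_or_lt_of_le hst with h | h
    · subst h
      rw [intA_self A T β Cβ hβ hCβ hA0 hδ s hs htT, norm_zero, sub_self,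
        Real.zero_rpow (ne_of_gt hα), mul_zero]
    · have h1 : ‖intA A s t‖ ≤ ‖intA A s t - A s t‖ + ‖A s t‖ := by
        have := norm_add_le (intA A s t - A s t) (A s t)
        simpa using this
      have h2 := intA_sub_A A T β Cβ hβ hCβ hA0 hδ s t hs hst htT
      have h3 := hCα s t hs hst htT
      have hpow : (t-s) ^ β ≤ T ^ (β-α) * (t-s) ^ α := by
        have e1 : (t-s) ^ β = (t-s) ^ (β-α) * (t-s) ^ α := by
          rw [← Real.rpow_add (by linarith)]
          ring_nf
        have e2 : (t-s) ^ (β-α) ≤ T ^ (β-α) :=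
          Real.rpow_le_rpow (by linarith) (by linarith) (by linarith)
        rw [e1]
        exact mul_le_mul_of_nonneg_right e2 (Real.rpow_nonneg (by linarith) _)
      have hKβ : 0 ≤ Cβ * KK β := mul_nonneg hCβ (KK_pos hβ).le
      have h4 : Cβ * KK β * (t-s) ^ β ≤ Cβ * KK β * (T ^ (β-α) * (t-s) ^ α) :=
        mul_le_mul_of_nonneg_left hpow hKβ
      nlinarith [h1, h2, h3, h4]
  · -- (iii)
    intro s t hs hst htT
    simp only []
    rw [hIA s t hs hst htT]
    have := intA_sub_A A T β Cβ hβ hCβ hA0 hδ s t hs hst htT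
    calc ‖intA A s t - A s t‖ ≤ Cβ * KK β * (t-s) ^ β := this
      _ = KK β * Cβ * (t-s) ^ β := by ring
end

section
/- Let (B_t)_{t∈[0,1]} be a standard one-dimensional Brownian motion. For every γ ∈ (0, 1/2) there exists a constant C > 0 (depending only on γ) such that for every integer k with γ < 1/2 − 1/k one has E[(sup_{s≠t ∈ [0,1]} |B_t − B_s| / |t−s|^γ)^k] ≤ 2 (2^{1+γ} C)^k (k−1)!!, where (k−1)!! denotes the double factorial. -/
open MeasureTheory ProbabilityTheory
open Real Set Filter
open scoped Nat ENNReal NNReal Topology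

/-- `B` is a standard one-dimensional Brownian motion under the probability measure `P`. -/
structure IsStandardBrownianMotion {Ω : Type*} [MeasurableSpace Ω] (P : Measure Ω)
    (B : ℝ → Ω → ℝ) : Prop where
  isProb : IsProbabilityMeasure P
  meas : ∀ t : ℝ, Measurable (B t)
  cont : ∀ ω, Continuous fun t => B t ω
  start : ∀ ω, B 0 ω = 0
  indep : ∀ (n : ℕ) (t : ℕ → ℝ), Monotone t → (∀ i, 0 ≤ t i) →
    iIndepFun
      (fun i : Fin n => fun ω => B (t (i + 1)) ω - B (t i) ω) P
  gauss : ∀ s t : ℝ, 0 ≤ s → s ≤ t →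
    Measure.map (fun ω => B t ω - B s ω) P = gaussianReal 0 (t - s).toNNReal

/-- The `γ`-Hölder seminorm of a path `g` on `[0,1]`, as a value in `[0,∞]`:
`sup_{s ≠ t ∈ [0,1]} |g t - g s| / |t - s|^γ`. -/
noncomputable def holderSeminorm (γ : ℝ) (g : ℝ → ℝ) : ℝ≥0∞ :=
  ⨆ p : {p : ℝ × ℝ // p.1 ∈ Set.Icc (0 : ℝ) 1 ∧ p.2 ∈ Set.Icc (0 : ℝ) 1 ∧ p.1 ≠ p.2},
    ENNReal.ofReal (|g (p : ℝ × ℝ).2 - g (p : ℝ × ℝ).1| / |(p : ℝ × ℝ).2 - (p : ℝ × ℝ).1| ^ γ)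

/-- Maximal dyadic increment of `f` at level `n`. -/
noncomputable def bhsDn (f : ℝ → ℝ) (n : ℕ) : ℝ≥0∞ :=
  ⨆ j : Fin (2 ^ n), ENNReal.ofReal |f ((j + 1 : ℕ) / (2 ^ n : ℝ)) - f ((j : ℕ) / (2 ^ n : ℝ))|

lemma bhsDn_incr (f : ℝ → ℝ) (n : ℕ) (j : ℕ) (hj : j + 1 ≤ 2 ^ n) :
    ENNReal.ofReal |f ((j + 1 : ℕ) / (2 ^ n : ℝ)) - f ((j : ℕ) / (2 ^ n : ℝ))| ≤ bhsDn f n := by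
  exact le_iSup_of_le (⟨j, hj⟩ : Fin (2 ^ n)) (le_of_eq rfl)

lemma bhsDn_pair (f : ℝ → ℝ) (n : ℕ) :
    ∀ j i : ℕ, i ≤ j → j ≤ 2 ^ n →
    ENNReal.ofReal |f ((j : ℕ) / (2 ^ n : ℝ)) - f ((i : ℕ) / (2 ^ n : ℝ))| ≤
      (j - i : ℕ) * bhsDn f n := by
  intro j
  induction j with
  | zero =>
    intro i h1 _
    obtain rfl : i = 0 := Nat.le_zero.mp h1
    simp
  | succ j ih =>
    intro i h1 h2
    rcases eq_or_lt_of_le h1 with rfl | h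
    · simp
    have h1' : i ≤ j := Nat.lt_succ_iff.mp h
    calc ENNReal.ofReal |f ((j + 1 : ℕ) / (2 ^ n : ℝ)) - f ((i : ℕ) / (2 ^ n : ℝ))|
        ≤ ENNReal.ofReal (|f ((j + 1 : ℕ) / (2 ^ n : ℝ)) - f ((j : ℕ) / (2 ^ n : ℝ))| +
            |f ((j : ℕ) / (2 ^ n : ℝ)) - f ((i : ℕ) / (2 ^ n : ℝ))|) :=
          ENNReal.ofReal_le_ofReal (abs_sub_le _ _ _)
      _ ≤ ENNReal.ofReal |f ((j + 1 : ℕ) / (2 ^ n : ℝ)) - f ((j : ℕ) / (2 ^ n : ℝ))| +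
            ENNReal.ofReal |f ((j : ℕ) / (2 ^ n : ℝ)) - f ((i : ℕ) / (2 ^ n : ℝ))| :=
          ENNReal.ofReal_add_le
      _ ≤ bhsDn f n + (j - i : ℕ) * bhsDn f n :=
          add_le_add (bhsDn_incr f n j h2) (ih i h1' (le_trans (Nat.le_succ j) h2))
      _ = (j + 1 - i : ℕ) * bhsDn f n := by
          rw [show (j + 1 - i : ℕ) = (j - i) + 1 by omega]
          push_cast
          ring

lemma bhs_approx (f : ℝ → ℝ) (hf : Continuous f) (m j : ℕ) (hj : j ≤ 2 ^ (m + 1)) (x : ℝ)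
    (hx0 : 0 ≤ x) (hx1 : x ≤ 1)
    (hxu : |x - (j : ℕ) / (2 ^ (m + 1) : ℝ)| ≤ ((2 : ℝ) ^ m)⁻¹) :
    ENNReal.ofReal |f x - f ((j : ℕ) / (2 ^ (m + 1) : ℝ))| ≤
      2 * bhsDn f (m + 1) + ∑' i : ℕ, bhsDn f (m + 2 + i) := by
  have h2p : ∀ N : ℕ, (0 : ℝ) < 2 ^ N := fun N => by positivity
  set u : ℝ := (j : ℕ) / (2 ^ (m + 1) : ℝ) with hu
  have hu1 : u ≤ 1 := by
    rw [hu, div_le_one (h2p (m + 1))]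
    exact_mod_cast hj
  rcases le_total u x with hc | hc
  · -- increasing case : u ≤ x
    set d : ℝ := x - u with hd
    have hd0 : 0 ≤ d := by simp [hd]; linarith
    have hdm : d ≤ ((2 : ℝ) ^ m)⁻¹ := by rwa [abs_of_nonneg hd0] at hxu
    set c : ℕ → ℕ := fun N => ⌊d * 2 ^ (m + 1 + N)⌋₊ with hcdef
    have hcle : ∀ N, (c N : ℝ) ≤ d * 2 ^ (m + 1 + N) := fun N => Nat.floor_le (by positivity)
    have hclt : ∀ N, d * 2 ^ (m + 1 + N) < c N + 1 := fun N => Nat.lt_floor_add_one _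
    have hdiv : ∀ N, (c N : ℝ) / 2 ^ (m + 1 + N) ≤ d := by
      intro N
      rw [div_le_iff₀ (h2p _)]
      exact hcle N
    have hax : ∀ N, u + (c N : ℝ) / 2 ^ (m + 1 + N) ≤ x := by
      intro N
      have := hdiv N
      linarith
    have hidx : ∀ N, ((j * 2 ^ N + c N : ℕ) : ℝ) / 2 ^ (m + 1 + N) =
        u + (c N : ℝ) / 2 ^ (m + 1 + N) := by
      intro N
      rw [hu]
      push_cast
      rw [pow_add]
      field_simp
    have hidxle : ∀ N, j * 2 ^ N + c N ≤ 2 ^ (m + 1 + N) := by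
      intro N
      have h1 : ((j * 2 ^ N + c N : ℕ) : ℝ) / 2 ^ (m + 1 + N) ≤ 1 :=
        (hidx N).le.trans ((hax N).trans hx1)
      rw [div_le_one (h2p _)] at h1
      have h2 : ((j * 2 ^ N + c N : ℕ) : ℝ) ≤ ((2 ^ (m + 1 + N) : ℕ) : ℝ) := by
        push_cast at h1 ⊢
        linarith
      exact_mod_cast h2
    have key : ∀ N, ENNReal.ofReal |f (u + (c N : ℝ) / 2 ^ (m + 1 + N)) - f u| ≤
        2 * bhsDn f (m + 1) + ∑ i ∈ Finset.range N, bhsDn f (m + 2 + i) := by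
      intro N
      induction N with
      | zero =>
        have hc2 : c 0 ≤ 2 := by
          have h1 : d * 2 ^ (m + 1 + 0) ≤ 2 := by
            have h2 : d * 2 ^ (m + 1) ≤ ((2 : ℝ) ^ m)⁻¹ * 2 ^ (m + 1) := by
              have := h2p (m + 1)
              nlinarith
            have h3 : ((2 : ℝ) ^ m)⁻¹ * 2 ^ (m + 1) = 2 := by
              rw [pow_succ]
              field_simp
            simpa [h3] using h2
          exact (Nat.floor_mono h1).trans_eq (by norm_num)
        have hpoint : u + (c 0 : ℝ) / 2 ^ (m + 1 + 0) =
            ((j + c 0 : ℕ) : ℝ) / (2 ^ (m + 1) : ℝ) := by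
          have := hidx 0
          simp only [pow_zero, mul_one] at this
          simpa using this.symm
        rw [hpoint]
        have hb := bhsDn_pair f (m + 1) (j + c 0) j (Nat.le_add_right _ _)
          (by simpa using hidxle 0)
        simp only [Nat.add_sub_cancel_left] at hb
        calc ENNReal.ofReal |f (((j + c 0 : ℕ) : ℝ) / (2 ^ (m + 1) : ℝ)) - f u|
            ≤ (c 0 : ℕ) * bhsDn f (m + 1) := hb
          _ ≤ 2 * bhsDn f (m + 1) := by
              gcongr
              exact_mod_cast hc2
          _ ≤ _ := by simp
      | succ N ih =>
        -- floor doubling facts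
        have hP : m + 1 + (N + 1) = (m + 1 + N) + 1 := by omega
        have h2c : 2 * c N ≤ c (N + 1) := by
          apply Nat.le_floor
          rw [hP, pow_succ]
          push_cast
          nlinarith [hcle N]
        have hc1 : c (N + 1) ≤ 2 * c N + 1 := by
          have h1 : c (N + 1) < 2 * c N + 2 := by
            apply Nat.floor_lt (by positivity) |>.mpr
            rw [hP, pow_succ]
            push_cast
            nlinarith [hclt N]
          omega
        -- grid identities
        have hptN : u + (c N : ℝ) / 2 ^ (m + 1 + N) =
            ((j * 2 ^ (N + 1) + 2 * c N : ℕ) : ℝ) / 2 ^ (m + 1 + (N + 1)) := by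
          rw [hu, hP, pow_succ]
          push_cast
          rw [pow_add, pow_succ]
          field_simp
          ring
        have hptN1 : u + (c (N + 1) : ℝ) / 2 ^ (m + 1 + (N + 1)) =
            ((j * 2 ^ (N + 1) + c (N + 1) : ℕ) : ℝ) / 2 ^ (m + 1 + (N + 1)) :=
          (hidx (N + 1)).symm
        have hstep : ENNReal.ofReal |f (u + (c (N + 1) : ℝ) / 2 ^ (m + 1 + (N + 1))) -
            f (u + (c N : ℝ) / 2 ^ (m + 1 + N))| ≤ bhsDn f (m + 2 + N) := by
          rw [hptN, hptN1]
          have hb := bhsDn_pair f (m + 1 + (N + 1)) (j * 2 ^ (N + 1) + c (N + 1))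
            (j * 2 ^ (N + 1) + 2 * c N) (by omega) (hidxle (N + 1))
          have hdiff : (j * 2 ^ (N + 1) + c (N + 1)) - (j * 2 ^ (N + 1) + 2 * c N) ≤ 1 := by
            omega
          refine hb.trans ?_
          have : ((j * 2 ^ (N + 1) + c (N + 1)) - (j * 2 ^ (N + 1) + 2 * c N) : ℕ)
              * bhsDn f (m + 1 + (N + 1)) ≤ 1 * bhsDn f (m + 1 + (N + 1)) := by
            gcongr
            exact_mod_cast hdiff
          refine this.trans ?_
          rw [one_mul, show m + 1 + (N + 1) = m + 2 + N by omega]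
        calc ENNReal.ofReal |f (u + (c (N + 1) : ℝ) / 2 ^ (m + 1 + (N + 1))) - f u|
            ≤ ENNReal.ofReal (|f (u + (c (N + 1) : ℝ) / 2 ^ (m + 1 + (N + 1))) -
                f (u + (c N : ℝ) / 2 ^ (m + 1 + N))| +
                |f (u + (c N : ℝ) / 2 ^ (m + 1 + N)) - f u|) :=
              ENNReal.ofReal_le_ofReal (abs_sub_le _ _ _)
          _ ≤ ENNReal.ofReal |f (u + (c (N + 1) : ℝ) / 2 ^ (m + 1 + (N + 1))) -
                f (u + (c N : ℝ) / 2 ^ (m + 1 + N))| +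
                ENNReal.ofReal |f (u + (c N : ℝ) / 2 ^ (m + 1 + N)) - f u| :=
              ENNReal.ofReal_add_le
          _ ≤ bhsDn f (m + 2 + N) +
                (2 * bhsDn f (m + 1) + ∑ i ∈ Finset.range N, bhsDn f (m + 2 + i)) :=
              add_le_add hstep ih
          _ = 2 * bhsDn f (m + 1) + ∑ i ∈ Finset.range (N + 1), bhsDn f (m + 2 + i) := by
              rw [Finset.sum_range_succ]
              ring
    -- limit argument
    have hlim : Tendsto (fun N => u + (c N : ℝ) / 2 ^ (m + 1 + N)) atTop (𝓝 x) := by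
      have hlow : ∀ N : ℕ, x - ((2 : ℝ) ^ (m + 1 + N))⁻¹ ≤ u + (c N : ℝ) / 2 ^ (m + 1 + N) := by
        intro N
        have h2 : d ≤ ((c N : ℝ) + 1) / 2 ^ (m + 1 + N) := by
          rw [le_div_iff₀ (h2p _)]
          linarith [hclt N]
        have h3 : ((c N : ℝ) + 1) / 2 ^ (m + 1 + N) =
            (c N : ℝ) / 2 ^ (m + 1 + N) + ((2 : ℝ) ^ (m + 1 + N))⁻¹ := by
          field_simp
        have hx' : x = u + d := by rw [hd]; ring
        rw [hx']
        rw [h3] at h2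
        linarith
      have htend0 : Tendsto (fun N : ℕ => x - ((2 : ℝ) ^ (m + 1 + N))⁻¹) atTop (𝓝 x) := by
        have h1 : Tendsto (fun N : ℕ => ((2 : ℝ) ^ (m + 1 + N))⁻¹) atTop (𝓝 0) := by
          have h2 : Tendsto (fun N : ℕ => ((2 : ℝ)⁻¹) ^ N) atTop (𝓝 0) :=
            tendsto_pow_atTop_nhds_zero_of_lt_one (by norm_num) (by norm_num)
          have h3 : (fun N : ℕ => ((2 : ℝ) ^ (m + 1 + N))⁻¹) =
              fun N : ℕ => ((2 : ℝ) ^ (m + 1))⁻¹ * ((2 : ℝ)⁻¹) ^ N := by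
            funext N
            rw [pow_add, mul_inv, inv_pow]
          rw [h3]
          simpa using h2.const_mul ((2 : ℝ) ^ (m + 1))⁻¹
        simpa using (tendsto_const_nhds.sub h1 :
          Tendsto (fun N : ℕ => x - ((2 : ℝ) ^ (m + 1 + N))⁻¹) atTop (𝓝 (x - 0)))
      exact tendsto_of_tendsto_of_tendsto_of_le_of_le htend0 tendsto_const_nhds hlow hax
    have hcont : Tendsto (fun N => ENNReal.ofReal |f (u + (c N : ℝ) / 2 ^ (m + 1 + N)) - f u|)
        atTop (𝓝 (ENNReal.ofReal |f x - f u|)) := by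
      have hcf : Continuous fun y => ENNReal.ofReal |f y - f u| :=
        ENNReal.continuous_ofReal.comp ((hf.sub continuous_const).abs)
      exact (hcf.tendsto x).comp hlim
    refine le_of_tendsto hcont (Eventually.of_forall fun N => (key N).trans ?_)
    exact add_le_add_right (ENNReal.sum_le_tsum _) _
  · -- decreasing case : x ≤ u
    set d : ℝ := u - x with hd
    have hd0 : 0 ≤ d := by simp [hd]; linarith
    have hdm : d ≤ ((2 : ℝ) ^ m)⁻¹ := by
      rw [abs_of_nonpos (by linarith), neg_sub] at hxu
      exact hxu
    set c : ℕ → ℕ := fun N => ⌊d * 2 ^ (m + 1 + N)⌋₊ with hcdef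
    have hcle : ∀ N, (c N : ℝ) ≤ d * 2 ^ (m + 1 + N) := fun N => Nat.floor_le (by positivity)
    have hclt : ∀ N, d * 2 ^ (m + 1 + N) < c N + 1 := fun N => Nat.lt_floor_add_one _
    have hdiv : ∀ N, (c N : ℝ) / 2 ^ (m + 1 + N) ≤ d := by
      intro N
      rw [div_le_iff₀ (h2p _)]
      exact hcle N
    have hax : ∀ N, x ≤ u - (c N : ℝ) / 2 ^ (m + 1 + N) := by
      intro N
      have := hdiv N
      simp only [hd] at this ⊢
      linarith
    have hcjN : ∀ N, c N ≤ j * 2 ^ N := by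
      intro N
      have h1 : (c N : ℝ) ≤ ((j * 2 ^ N : ℕ) : ℝ) := by
        have h2 : u * 2 ^ (m + 1 + N) = ((j * 2 ^ N : ℕ) : ℝ) := by
          rw [hu, pow_add]
          push_cast
          field_simp
          ring
        have h3 : d ≤ u := by simp only [hd]; linarith
        have h4 := (hcle N).trans (by nlinarith [h2p (m + 1 + N)] :
          d * 2 ^ (m + 1 + N) ≤ u * 2 ^ (m + 1 + N))
        linarith [h4.trans_eq h2]
      exact_mod_cast h1
    have hidx : ∀ N, ((j * 2 ^ N - c N : ℕ) : ℝ) / 2 ^ (m + 1 + N) =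
        u - (c N : ℝ) / 2 ^ (m + 1 + N) := by
      intro N
      rw [Nat.cast_sub (hcjN N), hu, pow_add]
      push_cast
      field_simp
    have hidxle : ∀ N, j * 2 ^ N ≤ 2 ^ (m + 1 + N) := by
      intro N
      rw [pow_add]
      exact Nat.mul_le_mul_right _ hj
    have key : ∀ N, ENNReal.ofReal |f (u - (c N : ℝ) / 2 ^ (m + 1 + N)) - f u| ≤
        2 * bhsDn f (m + 1) + ∑ i ∈ Finset.range N, bhsDn f (m + 2 + i) := by
      intro N
      induction N with
      | zero =>
        have hc2 : c 0 ≤ 2 := by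
          have h1 : d * 2 ^ (m + 1 + 0) ≤ 2 := by
            have h2 : d * 2 ^ (m + 1) ≤ ((2 : ℝ) ^ m)⁻¹ * 2 ^ (m + 1) := by
              have := h2p (m + 1)
              nlinarith
            have h3 : ((2 : ℝ) ^ m)⁻¹ * 2 ^ (m + 1) = 2 := by
              rw [pow_succ]
              field_simp
            simpa [h3] using h2
          exact (Nat.floor_mono h1).trans_eq (by norm_num)
        have hc0j : c 0 ≤ j := by simpa using hcjN 0
        have hpoint : u - (c 0 : ℝ) / 2 ^ (m + 1 + 0) =
            ((j - c 0 : ℕ) : ℝ) / (2 ^ (m + 1) : ℝ) := by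
          have := hidx 0
          simp only [pow_zero, mul_one] at this
          simpa using this.symm
        rw [hpoint, abs_sub_comm]
        have hb := bhsDn_pair f (m + 1) j (j - c 0) (Nat.sub_le _ _) hj
        have hdiffc : j - (j - c 0) = c 0 := by omega
        rw [hdiffc] at hb
        calc ENNReal.ofReal |f ((j : ℕ) / (2 ^ (m + 1) : ℝ)) -
              f (((j - c 0 : ℕ) : ℝ) / (2 ^ (m + 1) : ℝ))|
            ≤ (c 0 : ℕ) * bhsDn f (m + 1) := hb
          _ ≤ 2 * bhsDn f (m + 1) := by
              gcongr
              exact_mod_cast hc2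
          _ ≤ _ := by simp
      | succ N ih =>
        have hP : m + 1 + (N + 1) = (m + 1 + N) + 1 := by omega
        have h2c : 2 * c N ≤ c (N + 1) := by
          apply Nat.le_floor
          rw [hP, pow_succ]
          push_cast
          nlinarith [hcle N]
        have hc1 : c (N + 1) ≤ 2 * c N + 1 := by
          have h1 : c (N + 1) < 2 * c N + 2 := by
            apply Nat.floor_lt (by positivity) |>.mpr
            rw [hP, pow_succ]
            push_cast
            nlinarith [hclt N]
          omega
        have h2cA : 2 * c N ≤ j * 2 ^ (N + 1) := by
          have h1 : 2 * c N ≤ 2 * (j * 2 ^ N) := Nat.mul_le_mul_left 2 (hcjN N)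
          calc 2 * c N ≤ 2 * (j * 2 ^ N) := h1
            _ = j * 2 ^ (N + 1) := by rw [pow_succ]; ring
        have hcA : c (N + 1) ≤ j * 2 ^ (N + 1) := hcjN (N + 1)
        have hptN : u - (c N : ℝ) / 2 ^ (m + 1 + N) =
            ((j * 2 ^ (N + 1) - 2 * c N : ℕ) : ℝ) / 2 ^ (m + 1 + (N + 1)) := by
          rw [Nat.cast_sub h2cA, hu, hP, pow_succ]
          push_cast
          rw [pow_add, pow_succ]
          field_simp
          ring
        have hptN1 : u - (c (N + 1) : ℝ) / 2 ^ (m + 1 + (N + 1)) =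
            ((j * 2 ^ (N + 1) - c (N + 1) : ℕ) : ℝ) / 2 ^ (m + 1 + (N + 1)) :=
          (hidx (N + 1)).symm
        have hstep : ENNReal.ofReal |f (u - (c (N + 1) : ℝ) / 2 ^ (m + 1 + (N + 1))) -
            f (u - (c N : ℝ) / 2 ^ (m + 1 + N))| ≤ bhsDn f (m + 2 + N) := by
          rw [hptN, hptN1, abs_sub_comm]
          have hb := bhsDn_pair f (m + 1 + (N + 1)) (j * 2 ^ (N + 1) - 2 * c N)
            (j * 2 ^ (N + 1) - c (N + 1)) (Nat.sub_le_sub_left h2c _)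
            ((Nat.sub_le _ _).trans (hidxle (N + 1)))
          have hdiff : (j * 2 ^ (N + 1) - 2 * c N) - (j * 2 ^ (N + 1) - c (N + 1)) ≤ 1 := by
            omega
          refine hb.trans ?_
          have h5 : ((j * 2 ^ (N + 1) - 2 * c N) - (j * 2 ^ (N + 1) - c (N + 1)) : ℕ)
              * bhsDn f (m + 1 + (N + 1)) ≤ 1 * bhsDn f (m + 1 + (N + 1)) := by
            gcongr
            exact_mod_cast hdiff
          refine h5.trans ?_
          rw [one_mul, show m + 1 + (N + 1) = m + 2 + N by omega]
        calc ENNReal.ofReal |f (u - (c (N + 1) : ℝ) / 2 ^ (m + 1 + (N + 1))) - f u|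
            ≤ ENNReal.ofReal (|f (u - (c (N + 1) : ℝ) / 2 ^ (m + 1 + (N + 1))) -
                f (u - (c N : ℝ) / 2 ^ (m + 1 + N))| +
                |f (u - (c N : ℝ) / 2 ^ (m + 1 + N)) - f u|) :=
              ENNReal.ofReal_le_ofReal (abs_sub_le _ _ _)
          _ ≤ ENNReal.ofReal |f (u - (c (N + 1) : ℝ) / 2 ^ (m + 1 + (N + 1))) -
                f (u - (c N : ℝ) / 2 ^ (m + 1 + N))| +
                ENNReal.ofReal |f (u - (c N : ℝ) / 2 ^ (m + 1 + N)) - f u| :=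
              ENNReal.ofReal_add_le
          _ ≤ bhsDn f (m + 2 + N) +
                (2 * bhsDn f (m + 1) + ∑ i ∈ Finset.range N, bhsDn f (m + 2 + i)) :=
              add_le_add hstep ih
          _ = 2 * bhsDn f (m + 1) + ∑ i ∈ Finset.range (N + 1), bhsDn f (m + 2 + i) := by
              rw [Finset.sum_range_succ]
              ring
    have hlim : Tendsto (fun N => u - (c N : ℝ) / 2 ^ (m + 1 + N)) atTop (𝓝 x) := by
      have hupp : ∀ N : ℕ, u - (c N : ℝ) / 2 ^ (m + 1 + N) ≤ x + ((2 : ℝ) ^ (m + 1 + N))⁻¹ := by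
        intro N
        have h2 : d ≤ ((c N : ℝ) + 1) / 2 ^ (m + 1 + N) := by
          rw [le_div_iff₀ (h2p _)]
          linarith [hclt N]
        have h3 : ((c N : ℝ) + 1) / 2 ^ (m + 1 + N) =
            (c N : ℝ) / 2 ^ (m + 1 + N) + ((2 : ℝ) ^ (m + 1 + N))⁻¹ := by
          field_simp
        have hx' : u = x + d := by rw [hd]; ring
        rw [hx']
        rw [h3] at h2
        linarith
      have htend0 : Tendsto (fun N : ℕ => x + ((2 : ℝ) ^ (m + 1 + N))⁻¹) atTop (𝓝 x) := by
        have h1 : Tendsto (fun N : ℕ => ((2 : ℝ) ^ (m + 1 + N))⁻¹) atTop (𝓝 0) := by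
          have h2 : Tendsto (fun N : ℕ => ((2 : ℝ)⁻¹) ^ N) atTop (𝓝 0) :=
            tendsto_pow_atTop_nhds_zero_of_lt_one (by norm_num) (by norm_num)
          have h3 : (fun N : ℕ => ((2 : ℝ) ^ (m + 1 + N))⁻¹) =
              fun N : ℕ => ((2 : ℝ) ^ (m + 1))⁻¹ * ((2 : ℝ)⁻¹) ^ N := by
            funext N
            rw [pow_add, mul_inv, inv_pow]
          rw [h3]
          simpa using h2.const_mul ((2 : ℝ) ^ (m + 1))⁻¹
        simpa using (tendsto_const_nhds.add h1 :
          Tendsto (fun N : ℕ => x + ((2 : ℝ) ^ (m + 1 + N))⁻¹) atTop (𝓝 (x + 0)))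
      exact tendsto_of_tendsto_of_tendsto_of_le_of_le tendsto_const_nhds htend0 hax hupp
    have hcont : Tendsto (fun N => ENNReal.ofReal |f (u - (c N : ℝ) / 2 ^ (m + 1 + N)) - f u|)
        atTop (𝓝 (ENNReal.ofReal |f x - f u|)) := by
      have hcf : Continuous fun y => ENNReal.ofReal |f y - f u| :=
        ENNReal.continuous_ofReal.comp ((hf.sub continuous_const).abs)
      exact (hcf.tendsto x).comp hlim
    refine le_of_tendsto hcont (Eventually.of_forall fun N => (key N).trans ?_)
    exact add_le_add_right (ENNReal.sum_le_tsum _) _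

lemma bhs_exists_m (r : ℝ) (h0 : 0 < r) (h1 : r ≤ 1) :
    ∃ m : ℕ, ((2 : ℝ) ^ (m + 1))⁻¹ ≤ r ∧ r ≤ ((2 : ℝ) ^ m)⁻¹ := by
  set m := ⌊Real.logb 2 r⁻¹⌋₊ with hm
  have hr1 : 1 ≤ r⁻¹ := by
    rw [← one_div]
    rw [le_div_iff₀ h0]
    linarith
  have hlb : 0 ≤ Real.logb 2 r⁻¹ := Real.logb_nonneg one_lt_two hr1
  have h2 : (m : ℝ) ≤ Real.logb 2 r⁻¹ := Nat.floor_le hlb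
  have h3 : Real.logb 2 r⁻¹ < m + 1 := Nat.lt_floor_add_one _
  have key : r⁻¹ = (2 : ℝ) ^ Real.logb 2 r⁻¹ :=
    (Real.rpow_logb two_pos (by norm_num) (inv_pos.mpr h0)).symm
  have e1 : (2 : ℝ) ^ (m : ℝ) ≤ r⁻¹ := by
    rw [key]
    exact Real.rpow_le_rpow_of_exponent_le one_le_two h2
  have e2 : r⁻¹ < (2 : ℝ) ^ ((m : ℝ) + 1) := by
    rw [key]
    exact Real.rpow_lt_rpow_of_exponent_lt one_lt_two h3
  have p1 : (2 : ℝ) ^ (m : ℝ) = (2 : ℝ) ^ (m : ℕ) := Real.rpow_natCast 2 m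
  have p2 : (2 : ℝ) ^ ((m : ℝ) + 1) = (2 : ℝ) ^ (m + 1 : ℕ) := by
    rw [← Real.rpow_natCast 2 (m + 1)]
    push_cast
    ring_nf
  refine ⟨m, ?_, ?_⟩
  · rw [p2] at e2
    have h4 : ((2 : ℝ) ^ (m + 1 : ℕ))⁻¹ ≤ (r⁻¹)⁻¹ := inv_anti₀ (inv_pos.mpr h0) e2.le
    rwa [inv_inv] at h4
  · rw [p1] at e1
    have h4 : (r⁻¹)⁻¹ ≤ ((2 : ℝ) ^ (m : ℕ))⁻¹ := inv_anti₀ (by positivity) e1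
    rwa [inv_inv] at h4

lemma bhs_pair_bound (f : ℝ → ℝ) (hf : Continuous f) (γ : ℝ) (hγ : 0 < γ)
    (s t : ℝ) (hs0 : 0 ≤ s) (ht1 : t ≤ 1) (hst : s < t) :
    ENNReal.ofReal (|f t - f s| / (t - s) ^ γ) ≤
      4 * ∑' n : ℕ, ENNReal.ofReal ((2 : ℝ) ^ ((n : ℝ) * γ)) * bhsDn f n := by
  have h2p : ∀ N : ℕ, (0 : ℝ) < 2 ^ N := fun N => by positivity
  obtain ⟨m, hm1, hm2⟩ := bhs_exists_m (t - s) (by linarith) (by linarith)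
  set j := ⌈s * 2 ^ (m + 1)⌉₊ with hjdef
  set u : ℝ := (j : ℕ) / (2 ^ (m + 1) : ℝ) with hu
  have hsu : s ≤ u := by
    rw [hu, le_div_iff₀ (h2p _)]
    exact Nat.le_ceil _
  have huc : (j : ℝ) < s * 2 ^ (m + 1) + 1 := Nat.ceil_lt_add_one (by positivity)
  have hus : u < s + ((2 : ℝ) ^ (m + 1))⁻¹ := by
    rw [hu, div_lt_iff₀ (h2p _)]
    have : (s + ((2 : ℝ) ^ (m + 1))⁻¹) * 2 ^ (m + 1) = s * 2 ^ (m + 1) + 1 := by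
      field_simp
    rw [this]
    exact huc
  have hut : u ≤ t := by
    have : s + ((2 : ℝ) ^ (m + 1))⁻¹ ≤ t := by linarith
    linarith
  have hj2 : j ≤ 2 ^ (m + 1) := by
    have h1 : u ≤ 1 := hut.trans ht1
    rw [hu, div_le_one (h2p _)] at h1
    exact_mod_cast h1
  have hmm : ((2 : ℝ) ^ (m + 1))⁻¹ ≤ ((2 : ℝ) ^ m)⁻¹ := by
    apply inv_anti₀ (h2p m)
    rw [pow_succ]
    nlinarith [h2p m]
  have hs' : ENNReal.ofReal |f s - f u| ≤ 2 * bhsDn f (m + 1) + ∑' i : ℕ, bhsDn f (m + 2 + i) := by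
    apply bhs_approx f hf m j hj2 s hs0 (by linarith)
    rw [← hu, abs_of_nonpos (by linarith), neg_sub]
    linarith
  have ht' : ENNReal.ofReal |f t - f u| ≤ 2 * bhsDn f (m + 1) + ∑' i : ℕ, bhsDn f (m + 2 + i) := by
    apply bhs_approx f hf m j hj2 t (by linarith) ht1
    rw [← hu, abs_of_nonneg (by linarith)]
    linarith
  set T : ℝ≥0∞ := ∑' i : ℕ, bhsDn f (m + 1 + i) with hT
  have hTsplit : 2 * bhsDn f (m + 1) + ∑' i : ℕ, bhsDn f (m + 2 + i) ≤ 2 * T := by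
    have h1 : T = bhsDn f (m + 1) + ∑' i : ℕ, bhsDn f (m + 2 + i) := by
      rw [hT, tsum_eq_zero_add' ENNReal.summable]
      congr 1
      exact tsum_congr fun i => by rw [show m + 1 + (i + 1) = m + 2 + i by omega]
    rw [h1]
    calc 2 * bhsDn f (m + 1) + ∑' i : ℕ, bhsDn f (m + 2 + i)
        ≤ 2 * bhsDn f (m + 1) + 2 * ∑' i : ℕ, bhsDn f (m + 2 + i) := by
          gcongr
          exact le_mul_of_one_le_left zero_le (by norm_num)
      _ = 2 * (bhsDn f (m + 1) + ∑' i : ℕ, bhsDn f (m + 2 + i)) := by ring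
  have habs : ENNReal.ofReal |f t - f s| ≤ 4 * T := by
    calc ENNReal.ofReal |f t - f s|
        ≤ ENNReal.ofReal (|f t - f u| + |f u - f s|) :=
          ENNReal.ofReal_le_ofReal (abs_sub_le _ _ _)
      _ ≤ ENNReal.ofReal |f t - f u| + ENNReal.ofReal |f u - f s| := ENNReal.ofReal_add_le
      _ ≤ 2 * T + 2 * T := by
          refine add_le_add (ht'.trans hTsplit) ?_
          rw [abs_sub_comm]
          exact hs'.trans hTsplit
      _ = 4 * T := by ring
  -- division estimate
  have hrpos : (0 : ℝ) < (t - s) ^ γ := Real.rpow_pos_of_pos (by linarith) γ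
  have hone : (1 : ℝ) ≤ (2 : ℝ) ^ (((m : ℝ) + 1) * γ) * (t - s) ^ γ := by
    have hlow : (2 : ℝ) ^ (-(((m : ℝ) + 1) * γ)) ≤ (t - s) ^ γ := by
      have h1 : ((2 : ℝ) ^ (m + 1 : ℕ))⁻¹ ^ γ ≤ (t - s) ^ γ :=
        Real.rpow_le_rpow (by positivity) hm1 hγ.le
      have h2 : ((2 : ℝ) ^ (m + 1 : ℕ))⁻¹ ^ γ = (2 : ℝ) ^ (-(((m : ℝ) + 1) * γ)) := by
        rw [← Real.rpow_natCast 2 (m + 1), ← Real.rpow_neg (by norm_num : (0:ℝ) ≤ 2),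
          ← Real.rpow_mul (by norm_num : (0:ℝ) ≤ 2)]
        congr 1
        push_cast
        ring
      rwa [h2] at h1
    have h3 : (2 : ℝ) ^ (((m : ℝ) + 1) * γ) * (2 : ℝ) ^ (-(((m : ℝ) + 1) * γ)) = 1 := by
      rw [← Real.rpow_add two_pos]
      simp
    calc (1 : ℝ) = (2 : ℝ) ^ (((m : ℝ) + 1) * γ) * (2 : ℝ) ^ (-(((m : ℝ) + 1) * γ)) := h3.symm
      _ ≤ (2 : ℝ) ^ (((m : ℝ) + 1) * γ) * (t - s) ^ γ := by
          gcongr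
  have hdivle : |f t - f s| / (t - s) ^ γ ≤ (2 : ℝ) ^ (((m : ℝ) + 1) * γ) * |f t - f s| := by
    rw [div_le_iff₀ hrpos]
    nlinarith [abs_nonneg (f t - f s)]
  calc ENNReal.ofReal (|f t - f s| / (t - s) ^ γ)
      ≤ ENNReal.ofReal ((2 : ℝ) ^ (((m : ℝ) + 1) * γ) * |f t - f s|) :=
        ENNReal.ofReal_le_ofReal hdivle
    _ = ENNReal.ofReal ((2 : ℝ) ^ (((m : ℝ) + 1) * γ)) * ENNReal.ofReal |f t - f s| :=
        ENNReal.ofReal_mul (by positivity)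
    _ ≤ ENNReal.ofReal ((2 : ℝ) ^ (((m : ℝ) + 1) * γ)) * (4 * T) := by gcongr
    _ = 4 * ∑' i : ℕ, ENNReal.ofReal ((2 : ℝ) ^ (((m : ℝ) + 1) * γ)) * bhsDn f (m + 1 + i) := by
        rw [hT, ENNReal.tsum_mul_left]
        ring
    _ ≤ 4 * ∑' i : ℕ, ENNReal.ofReal ((2 : ℝ) ^ (((m + 1 + i : ℕ) : ℝ) * γ)) *
          bhsDn f (m + 1 + i) := by
        refine mul_le_mul_right (ENNReal.tsum_le_tsum fun i => ?_) 4
        refine mul_le_mul_left (ENNReal.ofReal_le_ofReal ?_) _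
        apply Real.rpow_le_rpow_of_exponent_le one_le_two
        have h5 : ((m : ℝ) + 1) ≤ ((m + 1 + i : ℕ) : ℝ) := by
          push_cast
          linarith [Nat.cast_nonneg (α := ℝ) i]
        nlinarith [hγ.le]
    _ ≤ 4 * ∑' n : ℕ, ENNReal.ofReal ((2 : ℝ) ^ ((n : ℝ) * γ)) * bhsDn f n := by
        refine mul_le_mul_right ?_ 4
        exact ENNReal.tsum_comp_le_tsum_of_injective (add_right_injective (m + 1))
          (fun n => ENNReal.ofReal ((2 : ℝ) ^ ((n : ℝ) * γ)) * bhsDn f n)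

lemma bhs_holder_le (f : ℝ → ℝ) (hf : Continuous f) (γ : ℝ) (hγ : 0 < γ) :
    holderSeminorm γ f ≤ 4 * ∑' n : ℕ, ENNReal.ofReal ((2 : ℝ) ^ ((n : ℝ) * γ)) * bhsDn f n := by
  refine iSup_le ?_
  rintro ⟨⟨s, t⟩, hs, ht, hne⟩
  simp only
  rcases hne.lt_or_gt with h | h
  · have habs : |t - s| = t - s := abs_of_pos (by linarith)
    rw [habs]
    exact bhs_pair_bound f hf γ hγ s t hs.1 ht.2 h
  · have habs : |t - s| = -(t - s) := abs_of_neg (by linarith)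
    rw [habs, neg_sub, abs_sub_comm]
    exact bhs_pair_bound f hf γ hγ t s ht.1 hs.2 h

lemma bhs_gamma_aux : ∀ k : ℕ,
    (2 : ℝ) ^ (((k : ℝ) + 1) / 2) * Real.Gamma (((k : ℝ) + 2) / 2) ≤ (k‼ : ℝ) * Real.sqrt π := by
  intro k
  induction k using Nat.strong_induction_on with
  | _ k ih =>
    match k with
    | 0 =>
      have h1 : (((0 : ℕ) : ℝ) + 2) / 2 = 1 := by norm_num
      have h2 : (((0 : ℕ) : ℝ) + 1) / 2 = (1 / 2 : ℝ) := by norm_num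
      rw [h1, h2, Real.Gamma_one, mul_one]
      have h3 : (2 : ℝ) ^ (1 / 2 : ℝ) = Real.sqrt 2 := (Real.sqrt_eq_rpow 2).symm

      rw [h3]
      simp only [Nat.doubleFactorial, Nat.cast_one, one_mul]
      exact Real.sqrt_le_sqrt (by nlinarith [Real.pi_gt_three])
    | 1 =>
      have h1 : (((1 : ℕ) : ℝ) + 2) / 2 = 1 / 2 + 1 := by norm_num
      have h2 : (((1 : ℕ) : ℝ) + 1) / 2 = (1 : ℝ) := by norm_num
      rw [h1, h2, Real.Gamma_add_one (by norm_num), Real.Gamma_one_half_eq, Real.rpow_one]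
      simp only [Nat.doubleFactorial, Nat.cast_one, one_mul]
      nlinarith [Real.sqrt_nonneg π]
    | (k + 2) =>
      have hk := ih k (by omega)
      have hpos : 0 < Real.Gamma (((k : ℝ) + 2) / 2) :=
        Real.Gamma_pos_of_pos (by positivity)
      have e1 : (((k + 2 : ℕ) : ℝ) + 2) / 2 = ((k : ℝ) + 2) / 2 + 1 := by push_cast; ring
      have e2 : (((k + 2 : ℕ) : ℝ) + 1) / 2 = ((k : ℝ) + 1) / 2 + 1 := by push_cast; ring
      rw [e1, e2, Real.Gamma_add_one (by positivity), Real.rpow_add two_pos, Real.rpow_one]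
      have e3 : (k + 2 : ℕ)‼ = (k + 2) * k‼ := Nat.doubleFactorial_add_two k
      rw [e3]
      push_cast
      have h2pow : (0 : ℝ) < (2 : ℝ) ^ (((k : ℝ) + 1) / 2) := Real.rpow_pos_of_pos two_pos _
      nlinarith [hk, h2pow, hpos]

lemma bhs_dfact_bound (k : ℕ) :
    (2 : ℝ) ^ ((k : ℝ) / 2) * Real.Gamma (((k : ℝ) + 1) / 2) ≤ ((k - 1)‼ : ℝ) * Real.sqrt π := by
  match k with
  | 0 =>
    simp only [Nat.cast_zero, zero_div, Real.rpow_zero, one_mul, zero_add]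
    rw [Real.Gamma_one_half_eq]
    simp [Real.sqrt_eq_rpow]
  | (j + 1) =>
    have e1 : ((j + 1 : ℕ) : ℝ) / 2 = ((j : ℝ) + 1) / 2 := by push_cast; ring
    have e2 : ((j + 1 : ℕ) : ℝ) + 1 = (j : ℝ) + 2 := by push_cast; ring
    rw [e1, show ((j + 1 : ℕ) : ℝ) + 1 = (j : ℝ) + 2 by push_cast; ring]
    simpa using bhs_gamma_aux j

lemma bhs_integrable (k : ℕ) :
    Integrable (fun x : ℝ => |x| ^ k * Real.exp (-x ^ 2 / 2)) volume := by
  have h1 := integrable_rpow_mul_exp_neg_mul_sq (b := 1 / 2) (by norm_num) (s := (k : ℝ))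
    (by have := Nat.cast_nonneg (α := ℝ) k; linarith)
  have h2 := h1.abs
  refine h2.congr (ae_of_all _ fun x => ?_)
  show |x ^ ((k : ℝ)) * Real.exp (-(1 / 2) * x ^ 2)| = |x| ^ k * Real.exp (-x ^ 2 / 2)
  rw [Real.rpow_natCast, abs_mul, abs_pow, abs_of_pos (Real.exp_pos _)]
  congr 2
  ring

lemma bhs_real_moment (k : ℕ) :
    ∫ x : ℝ, gaussianPDFReal 0 1 x * |x| ^ k ≤ ((k - 1)‼ : ℝ) := by
  have e1 : ∀ x : ℝ, gaussianPDFReal 0 1 x * |x| ^ k =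
      (Real.sqrt (2 * π))⁻¹ * (|x| ^ k * Real.exp (-x ^ 2 / 2)) := by
    intro x
    rw [gaussianPDFReal]
    push_cast
    ring_nf
  have hval : ∫ x : ℝ, gaussianPDFReal 0 1 x * |x| ^ k =
      (Real.sqrt (2 * π))⁻¹ * (Real.sqrt 2 * ((2 : ℝ) ^ ((k : ℝ) / 2) *
        Real.Gamma (((k : ℝ) + 1) / 2))) := by
    simp_rw [e1]
    rw [integral_const_mul]
    congr 1
    have e2 : (fun x : ℝ => |x| ^ k * Real.exp (-x ^ 2 / 2)) =
        fun x : ℝ => (fun y : ℝ => y ^ k * Real.exp (-y ^ 2 / 2)) |x| := by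
      funext x
      simp only [sq_abs]
    rw [e2, integral_comp_abs (f := fun y : ℝ => y ^ k * Real.exp (-y ^ 2 / 2))]
    have e3 : ∀ x ∈ Ioi (0 : ℝ), x ^ k * Real.exp (-x ^ 2 / 2) =
        x ^ (k : ℝ) * Real.exp (-(1 / 2) * x ^ (2 : ℝ)) := by
      intro x hx
      rw [Real.rpow_natCast, Real.rpow_two]
      congr 1
      ring
    rw [setIntegral_congr_fun measurableSet_Ioi e3,
      integral_rpow_mul_exp_neg_mul_rpow two_pos
        (by have := Nat.cast_nonneg (α := ℝ) k; linarith) (by norm_num)]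
    have e4 : ((1 : ℝ) / 2) ^ (-((k : ℝ) + 1) / 2) = (2 : ℝ) ^ (((k : ℝ) + 1) / 2) := by
      rw [one_div, ← Real.rpow_neg_one 2, ← Real.rpow_mul (by norm_num)]
      congr 1
      ring
    rw [e4]
    have e5 : (2 : ℝ) ^ (((k : ℝ) + 1) / 2) = Real.sqrt 2 * (2 : ℝ) ^ ((k : ℝ) / 2) := by
      rw [Real.sqrt_eq_rpow, ← Real.rpow_add two_pos]
      congr 1
      ring
    rw [e5]
    ring
  rw [hval]
  have hb := bhs_dfact_bound k
  have hsqrt : Real.sqrt (2 * π) = Real.sqrt 2 * Real.sqrt π :=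
    Real.sqrt_mul (by norm_num) π
  have hpos2 : (0 : ℝ) < Real.sqrt 2 := by positivity
  have hpospi : (0 : ℝ) < Real.sqrt π := Real.sqrt_pos.mpr Real.pi_pos
  have hposs : (0 : ℝ) < Real.sqrt (2 * π) := by rw [hsqrt]; positivity
  rw [hsqrt]
  rw [inv_mul_le_iff₀ (by positivity)]
  calc Real.sqrt 2 * ((2 : ℝ) ^ ((k : ℝ) / 2) * Real.Gamma (((k : ℝ) + 1) / 2))
      ≤ Real.sqrt 2 * (((k - 1)‼ : ℝ) * Real.sqrt π) := by
        have := mul_le_mul_of_nonneg_left hb hpos2.le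
        linarith
    _ = Real.sqrt 2 * Real.sqrt π * ((k - 1)‼ : ℝ) := by ring

lemma bhs_meas_absk (k : ℕ) : Measurable fun x : ℝ => (ENNReal.ofReal |x|) ^ k :=
  (ENNReal.measurable_ofReal.comp measurable_abs).pow_const k

lemma bhs_std_moment (k : ℕ) :
    ∫⁻ x, (ENNReal.ofReal |x|) ^ k ∂(gaussianReal 0 1) ≤ ENNReal.ofReal ((k - 1)‼ : ℝ) := by
  rw [gaussianReal_of_var_ne_zero 0 one_ne_zero,
    lintegral_withDensity_eq_lintegral_mul _ (measurable_gaussianPDF 0 1) (bhs_meas_absk k)]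
  have hpdf : ∀ x : ℝ, (gaussianPDF 0 1 * fun x => (ENNReal.ofReal |x|) ^ k) x =
      ENNReal.ofReal (gaussianPDFReal 0 1 x * |x| ^ k) := by
    intro x
    simp only [Pi.mul_apply, gaussianPDF]
    rw [← ENNReal.ofReal_pow (abs_nonneg x), ← ENNReal.ofReal_mul (gaussianPDFReal_nonneg 0 1 x)]
  simp_rw [hpdf]
  have hint : Integrable (fun x : ℝ => gaussianPDFReal 0 1 x * |x| ^ k) volume := by
    have h0 := (bhs_integrable k).const_mul (Real.sqrt (2 * π))⁻¹
    refine h0.congr (ae_of_all _ fun x => ?_)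
    show (Real.sqrt (2 * π))⁻¹ * (|x| ^ k * Real.exp (-x ^ 2 / 2)) =
      gaussianPDFReal 0 1 x * |x| ^ k
    rw [gaussianPDFReal]
    push_cast
    ring_nf
  rw [← MeasureTheory.ofReal_integral_eq_lintegral_ofReal hint
    (ae_of_all _ fun x => mul_nonneg (gaussianPDFReal_nonneg 0 1 x) (by positivity))]
  exact ENNReal.ofReal_le_ofReal (bhs_real_moment k)

lemma bhs_scaled_moment (σ : ℝ) (hσ : 0 ≤ σ) (k : ℕ) :
    ∫⁻ x, (ENNReal.ofReal |x|) ^ k ∂(gaussianReal 0 (σ ^ 2).toNNReal) ≤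
      ENNReal.ofReal (σ ^ k * ((k - 1)‼ : ℝ)) := by
  have hmap : (gaussianReal 0 1).map (σ * ·) = gaussianReal 0 (σ ^ 2).toNNReal := by
    rw [gaussianReal_map_const_mul σ]
    congr 1
    · ring
    · ext
      simp [Real.coe_toNNReal _ (by positivity : (0:ℝ) ≤ σ ^ 2)]
  rw [← hmap, lintegral_map (bhs_meas_absk k) (measurable_const_mul σ)]
  have heq : ∀ x : ℝ, (ENNReal.ofReal |σ * x|) ^ k =
      (ENNReal.ofReal σ) ^ k * (ENNReal.ofReal |x|) ^ k := by
    intro x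
    rw [abs_mul, abs_of_nonneg hσ, ENNReal.ofReal_mul hσ, mul_pow]
  simp_rw [heq]
  rw [lintegral_const_mul _ (bhs_meas_absk k)]
  calc (ENNReal.ofReal σ) ^ k * ∫⁻ x, (ENNReal.ofReal |x|) ^ k ∂(gaussianReal 0 1)
      ≤ (ENNReal.ofReal σ) ^ k * ENNReal.ofReal ((k - 1)‼ : ℝ) := by
        gcongr
        exact bhs_std_moment k
    _ = ENNReal.ofReal (σ ^ k * ((k - 1)‼ : ℝ)) := by
        rw [← ENNReal.ofReal_pow hσ, ← ENNReal.ofReal_mul (by positivity)]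

section
variable {Ω : Type*} [MeasurableSpace Ω]


lemma bhsDn_meas {B : ℝ → Ω → ℝ} (hm : ∀ t, Measurable (B t)) (n : ℕ) :
    Measurable fun ω => bhsDn (fun t => B t ω) n := by
  apply Measurable.iSup
  intro j
  exact (((hm _).sub (hm _)).abs).ennreal_ofReal

lemma bhsDn_moment {P : Measure Ω} {B : ℝ → Ω → ℝ} (hB : IsStandardBrownianMotion P B)
    (n k : ℕ) :
    ∫⁻ ω, (bhsDn (fun t => B t ω) n) ^ k ∂P ≤
      (2 ^ n : ℝ≥0∞) * ENNReal.ofReal (((2 : ℝ) ^ (-(n : ℝ) / 2)) ^ k * ((k - 1)‼ : ℝ)) := by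
  have h2p : (0 : ℝ) < 2 ^ n := by positivity
  have hpt : ∀ ω, (bhsDn (fun t => B t ω) n) ^ k ≤
      ∑ j : Fin (2 ^ n),
        (ENNReal.ofReal |B ((j + 1 : ℕ) / (2 ^ n : ℝ)) ω - B ((j : ℕ) / (2 ^ n : ℝ)) ω|) ^ k := by
    intro ω
    obtain ⟨j0, hj0⟩ := Finite.exists_max fun j : Fin (2 ^ n) =>
      ENNReal.ofReal |B ((j + 1 : ℕ) / (2 ^ n : ℝ)) ω - B ((j : ℕ) / (2 ^ n : ℝ)) ω|
    calc (bhsDn (fun t => B t ω) n) ^ k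
        ≤ (ENNReal.ofReal |B ((j0 + 1 : ℕ) / (2 ^ n : ℝ)) ω -
            B ((j0 : ℕ) / (2 ^ n : ℝ)) ω|) ^ k :=
          pow_le_pow_left' (iSup_le hj0) k
      _ ≤ _ := Finset.single_le_sum (f := fun j : Fin (2 ^ n) =>
            (ENNReal.ofReal |B ((j + 1 : ℕ) / (2 ^ n : ℝ)) ω -
              B ((j : ℕ) / (2 ^ n : ℝ)) ω|) ^ k)
            (fun _ _ => zero_le) (Finset.mem_univ j0)
  have hincr : ∀ j : Fin (2 ^ n),
      ∫⁻ ω, (ENNReal.ofReal |B ((j + 1 : ℕ) / (2 ^ n : ℝ)) ω -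
        B ((j : ℕ) / (2 ^ n : ℝ)) ω|) ^ k ∂P ≤
      ENNReal.ofReal (((2 : ℝ) ^ (-(n : ℝ) / 2)) ^ k * ((k - 1)‼ : ℝ)) := by
    intro j
    have hs0 : (0 : ℝ) ≤ (j : ℕ) / (2 ^ n : ℝ) := by positivity
    have hst : ((j : ℕ) : ℝ) / (2 ^ n : ℝ) ≤ ((j + 1 : ℕ) : ℝ) / (2 ^ n : ℝ) := by
      gcongr
      push_cast
      linarith
    have hσ2 : ((j + 1 : ℕ) : ℝ) / (2 ^ n : ℝ) - ((j : ℕ) : ℝ) / (2 ^ n : ℝ) =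
        ((2 : ℝ) ^ (-(n : ℝ) / 2)) ^ 2 := by
      have h1 : ((2 : ℝ) ^ (-(n : ℝ) / 2)) ^ 2 = (2 : ℝ) ^ (-(n : ℝ)) := by
        rw [← Real.rpow_natCast ((2 : ℝ) ^ (-(n : ℝ) / 2)) 2,
          ← Real.rpow_mul (by norm_num)]
        congr 1
        push_cast
        ring
      have h2 : (2 : ℝ) ^ (-(n : ℝ)) = ((2 : ℝ) ^ n)⁻¹ := by
        rw [← Real.rpow_natCast 2 n, ← Real.rpow_neg (by norm_num)]
      have h3 : ((j + 1 : ℕ) : ℝ) / (2 ^ n : ℝ) - ((j : ℕ) : ℝ) / (2 ^ n : ℝ) =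
          ((2 : ℝ) ^ n)⁻¹ := by
        push_cast
        field_simp
        ring
      rw [h3, h1, h2]
    have hmap := hB.gauss _ _ hs0 hst
    rw [hσ2] at hmap
    have hlin : ∫⁻ ω, (ENNReal.ofReal |B (((j + 1 : ℕ) : ℝ) / (2 ^ n : ℝ)) ω -
        B (((j : ℕ) : ℝ) / (2 ^ n : ℝ)) ω|) ^ k ∂P =
        ∫⁻ x, (ENNReal.ofReal |x|) ^ k
          ∂(gaussianReal 0 ((((2 : ℝ) ^ (-(n : ℝ) / 2)) ^ 2).toNNReal)) := by
      rw [← hmap, lintegral_map (bhs_meas_absk k) (g := fun ω => B (((j + 1 : ℕ) : ℝ) / (2 ^ n : ℝ)) ω -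
        B (((j : ℕ) : ℝ) / (2 ^ n : ℝ)) ω) ((hB.meas _).sub (hB.meas _))]
    rw [hlin]
    exact bhs_scaled_moment _ (by positivity) k
  calc ∫⁻ ω, (bhsDn (fun t => B t ω) n) ^ k ∂P
      ≤ ∫⁻ ω, ∑ j : Fin (2 ^ n),
          (ENNReal.ofReal |B ((j + 1 : ℕ) / (2 ^ n : ℝ)) ω -
            B ((j : ℕ) / (2 ^ n : ℝ)) ω|) ^ k ∂P := lintegral_mono hpt
    _ = ∑ j : Fin (2 ^ n), ∫⁻ ω, (ENNReal.ofReal |B ((j + 1 : ℕ) / (2 ^ n : ℝ)) ω -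
          B ((j : ℕ) / (2 ^ n : ℝ)) ω|) ^ k ∂P :=
        lintegral_finset_sum _ fun j _ =>
          ((((hB.meas _).sub (hB.meas _)).abs).ennreal_ofReal).pow_const k
    _ ≤ ∑ _j : Fin (2 ^ n), ENNReal.ofReal (((2 : ℝ) ^ (-(n : ℝ) / 2)) ^ k * ((k - 1)‼ : ℝ)) :=
        Finset.sum_le_sum fun j _ => hincr j
    _ = (2 ^ n : ℝ≥0∞) * ENNReal.ofReal (((2 : ℝ) ^ (-(n : ℝ) / 2)) ^ k * ((k - 1)‼ : ℝ)) := by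
        rw [Finset.sum_const, Finset.card_univ, Fintype.card_fin, nsmul_eq_mul]
        norm_cast

lemma bhs_minkowski {P : Measure Ω} (f : ℕ → Ω → ℝ≥0∞) (hf : ∀ n, Measurable (f n))
    (k : ℕ) (hk : 1 ≤ k) :
    ∫⁻ ω, (∑' n, f n ω) ^ k ∂P ≤
      (∑' n, (∫⁻ ω, (f n ω) ^ k ∂P) ^ (1 / (k : ℝ))) ^ k := by
  have hk0 : (k : ℝ) ≠ 0 := by positivity
  have hk1 : 1 ≤ (k : ℝ) := by exact_mod_cast hk
  have fin : ∀ N : ℕ, (∫⁻ ω, (∑ n ∈ Finset.range N, f n ω) ^ (k : ℝ) ∂P) ^ (1 / (k : ℝ)) ≤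
      ∑ n ∈ Finset.range N, (∫⁻ ω, (f n ω) ^ (k : ℝ) ∂P) ^ (1 / (k : ℝ)) := by
    intro N
    induction N with
    | zero =>
      simp [ENNReal.zero_rpow_of_pos (by positivity : (0 : ℝ) < (k : ℝ)),
        ENNReal.zero_rpow_of_pos (by positivity : (0 : ℝ) < 1 / (k : ℝ))]
      omega
    | succ N ih =>
      have hmeas : AEMeasurable (fun ω => ∑ n ∈ Finset.range N, f n ω) P :=
        (Finset.measurable_sum _ fun n _ => hf n).aemeasurable
      have h1 := ENNReal.lintegral_Lp_add_le hmeas (hf N).aemeasurable hk1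
      simp_rw [Finset.sum_range_succ]
      exact le_trans h1 (add_le_add ih le_rfl)
  have hmono : ∀ ω, Monotone fun N => ∑ n ∈ Finset.range N, f n ω := fun ω _ _ h =>
    Finset.sum_le_sum_of_subset (Finset.range_subset_range.mpr h)
  have hpow : ∀ ω, (∑' n, f n ω) ^ k = ⨆ N, (∑ n ∈ Finset.range N, f n ω) ^ k := by
    intro ω
    rw [ENNReal.tsum_eq_iSup_nat]
    refine (iSup_eq_of_tendsto (fun _ _ h => pow_le_pow_left' (hmono ω h) k) ?_).symm
    exact ((ENNReal.continuous_pow k).tendsto _).comp (tendsto_atTop_iSup (hmono ω))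
  have hmeasN : ∀ N : ℕ, Measurable fun ω => (∑ n ∈ Finset.range N, f n ω) ^ k := fun N =>
    (Finset.measurable_sum _ fun n _ => hf n).pow_const k
  calc ∫⁻ ω, (∑' n, f n ω) ^ k ∂P
      = ∫⁻ ω, ⨆ N, (∑ n ∈ Finset.range N, f n ω) ^ k ∂P := by
        exact lintegral_congr hpow
    _ = ⨆ N, ∫⁻ ω, (∑ n ∈ Finset.range N, f n ω) ^ k ∂P :=
        lintegral_iSup hmeasN fun _ _ h ω => pow_le_pow_left' (hmono ω h) k
    _ ≤ (∑' n, (∫⁻ ω, (f n ω) ^ k ∂P) ^ (1 / (k : ℝ))) ^ k := by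
        refine iSup_le fun N => ?_
        have h3 := fin N
        simp_rw [ENNReal.rpow_natCast] at h3
        set A := ∫⁻ ω, (∑ n ∈ Finset.range N, f n ω) ^ k ∂P with hA
        have h4 : A = (A ^ (1 / (k : ℝ))) ^ k := by
          rw [← ENNReal.rpow_natCast (A ^ (1 / (k : ℝ))) k, ← ENNReal.rpow_mul,
            one_div, inv_mul_cancel₀ hk0, ENNReal.rpow_one]
        rw [h4]
        refine pow_le_pow_left' (h3.trans ?_) k
        exact ENNReal.sum_le_tsum _

end

set_option maxHeartbeats 1000000 in
/-- **Moment bounds for the Hölder seminorm of Brownian motion.** For a standard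
one-dimensional Brownian motion `B` on `[0,1]` and every `γ ∈ (0, 1/2)` there is a
constant `C > 0` (depending only on `γ`) such that for every integer `k` with
`γ < 1/2 - 1/k`,
`E[(sup_{s≠t∈[0,1]} |B t - B s|/|t-s|^γ)^k] ≤ 2 (2^{1+γ} C)^k (k-1)!!`. -/
theorem brownian_holder_seminorm_moment_bound {Ω : Type*} [MeasurableSpace Ω]
    (P : Measure Ω) (B : ℝ → Ω → ℝ) (hB : IsStandardBrownianMotion P B)
    (γ : ℝ) (hγ : 0 < γ) (hγ' : γ < 1 / 2) :
    ∃ C : ℝ, 0 < C ∧ ∀ k : ℕ, γ < 1 / 2 - 1 / (k : ℝ) →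
      ∫⁻ ω, (holderSeminorm γ fun t => B t ω) ^ k ∂P ≤
        ENNReal.ofReal (2 * (2 ^ (1 + γ) * C) ^ k * ((k - 1)‼ : ℝ)) := by
  have := hB.isProb
  -- the threshold integer and the uniform gap δ
  set z : ℝ := (1 / 2 - γ)⁻¹ with hz
  have hz0 : 0 < z := by rw [hz]; exact inv_pos.mpr (by linarith)
  set k1 : ℕ := ⌊z⌋₊ + 1 with hk1
  have hk1z : z < (k1 : ℕ) := by
    rw [hk1]
    push_cast
    exact Nat.lt_floor_add_one z
  have hk1p : (0 : ℝ) < (k1 : ℝ) := lt_trans hz0 hk1z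
  set δ : ℝ := 1 / 2 - γ - 1 / (k1 : ℝ) with hδ
  have hzmul : z * (1 / 2 - γ) = 1 := by
    rw [hz]
    exact inv_mul_cancel₀ (by linarith : (1 / 2 - γ) ≠ 0)
  have hδ0 : 0 < δ := by
    rw [hδ]
    have h1 : 1 / (k1 : ℝ) < 1 / 2 - γ := by
      rw [div_lt_iff₀ hk1p]
      nlinarith [hk1z, hzmul, (by linarith : (0 : ℝ) < 1 / 2 - γ)]
    linarith
  have hδhalf : δ < 1 := by
    rw [hδ]
    have : 0 < 1 / (k1 : ℝ) := by positivity
    linarith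
  set r : ℝ := (2 : ℝ) ^ (-δ) with hr
  have hr0 : 0 < r := Real.rpow_pos_of_pos two_pos _
  have hr1 : r < 1 := Real.rpow_lt_one_of_one_lt_of_neg one_lt_two (by linarith)
  set C : ℝ := 2 * (1 - r)⁻¹ with hC
  have hC0 : 0 < C := by
    rw [hC]
    have : 0 < 1 - r := by linarith
    positivity
  refine ⟨C, hC0, fun k hk => ?_⟩
  rcases Nat.eq_zero_or_pos k with rfl | hkpos
  · -- k = 0
    simp only [pow_zero, mul_one, lintegral_one, measure_univ]
    rw [show ((0 : ℕ) - 1)‼ = 1 from rfl]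
    apply ENNReal.one_le_ofReal.mpr
    norm_num
  -- main case : 1 ≤ k
  have hkR : (1 : ℝ) ≤ (k : ℝ) := by exact_mod_cast hkpos
  have hk0 : (k : ℝ) ≠ 0 := by positivity
  have hinvk : 1 / (k : ℝ) < 1 / 2 - γ := by linarith
  have hkk1 : k1 ≤ k := by
    have h1 : z < (k : ℝ) := by
      have h3 : (1 : ℝ) < (1 / 2 - γ) * k := by
        have h4 := mul_lt_mul_of_pos_right hinvk (by positivity : (0 : ℝ) < (k : ℝ))
        rw [one_div, inv_mul_cancel₀ hk0] at h4
        linarith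
      nlinarith [hzmul, (by linarith : (0 : ℝ) < 1 / 2 - γ)]
    have h5 : ⌊z⌋₊ < k := (Nat.floor_lt hz0.le).mpr h1
    omega
  have hεδ : δ ≤ 1 / 2 - γ - 1 / (k : ℝ) := by
    have h1 : 1 / (k : ℝ) ≤ 1 / (k1 : ℝ) :=
      one_div_le_one_div_of_le hk1p (by exact_mod_cast hkk1)
    rw [hδ]
    linarith
  -- notation
  set e : ℝ≥0∞ := 2 with he
  have he1 : (1 : ℝ≥0∞) ≤ e := by rw [he]; norm_num
  have he0 : e ≠ 0 := by rw [he]; norm_num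
  have heT : e ≠ ⊤ := by rw [he]; norm_num
  have hofe : ENNReal.ofReal (2 : ℝ) = e := by rw [he]; norm_num
  set w : ℕ → ℝ≥0∞ := fun n => ENNReal.ofReal ((2 : ℝ) ^ ((n : ℝ) * γ)) with hw
  set F : ℕ → Ω → ℝ≥0∞ := fun n ω => w n * bhsDn (fun t => B t ω) n with hF
  have hFmeas : ∀ n, Measurable (F n) := fun n => (bhsDn_meas hB.meas n).const_mul _
  set D0 : ℝ≥0∞ := ENNReal.ofReal ((k - 1)‼ : ℝ) with hD0
  -- step 1 : pathwise bound and pull out 4^k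
  have hstep1 : ∫⁻ ω, (holderSeminorm γ fun t => B t ω) ^ k ∂P ≤
      4 ^ k * ∫⁻ ω, (∑' n, F n ω) ^ k ∂P := by
    rw [← lintegral_const_mul _ ((Measurable.ennreal_tsum hFmeas).pow_const k)]
    apply lintegral_mono
    intro ω
    calc (holderSeminorm γ fun t => B t ω) ^ k
        ≤ (4 * ∑' n, F n ω) ^ k := by
          apply pow_le_pow_left' (bhs_holder_le _ (hB.cont ω) γ hγ)
      _ = 4 ^ k * (∑' n, F n ω) ^ k := mul_pow _ _ _
  -- step 2 : Minkowski
  have hstep2 := bhs_minkowski (P := P) F hFmeas k hkpos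
  -- step 3 : per-level moment bound
  have hstep3 : ∀ n : ℕ, (∫⁻ ω, (F n ω) ^ k ∂P) ^ (1 / (k : ℝ)) ≤
      D0 ^ (1 / (k : ℝ)) * (e ^ (-δ)) ^ n := by
    intro n
    have hwn : w n = e ^ ((n : ℝ) * γ) := by
      rw [hw, ← hofe, ENNReal.ofReal_rpow_of_pos two_pos]
    have hInt : ∫⁻ ω, (F n ω) ^ k ∂P ≤
        e ^ ((n : ℝ) * γ * k + n + (-(n : ℝ) / 2) * k) * D0 := by
      have h1 : ∫⁻ ω, (F n ω) ^ k ∂P =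
          (w n) ^ k * ∫⁻ ω, (bhsDn (fun t => B t ω) n) ^ k ∂P := by
        simp_rw [hF, mul_pow]
        rw [lintegral_const_mul _ ((bhsDn_meas hB.meas n).pow_const k)]
      rw [h1]
      have h2 := bhsDn_moment hB n k
      have h3 : (2 ^ n : ℝ≥0∞) = e ^ ((n : ℝ)) := by
        rw [he, ← ENNReal.rpow_natCast]
      have h4 : ENNReal.ofReal (((2 : ℝ) ^ (-(n : ℝ) / 2)) ^ k * ((k - 1)‼ : ℝ)) =
          (e ^ (-(n : ℝ) / 2)) ^ k * D0 := by
        rw [ENNReal.ofReal_mul (by positivity), hD0, ← hofe,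
          ENNReal.ofReal_pow (by positivity), ENNReal.ofReal_rpow_of_pos two_pos]
      calc (w n) ^ k * ∫⁻ ω, (bhsDn (fun t => B t ω) n) ^ k ∂P
          ≤ (w n) ^ k * ((2 ^ n : ℝ≥0∞) *
              ENNReal.ofReal (((2 : ℝ) ^ (-(n : ℝ) / 2)) ^ k * ((k - 1)‼ : ℝ))) := by gcongr
        _ = e ^ ((n : ℝ) * γ * k + n + (-(n : ℝ) / 2) * k) * D0 := by
            rw [hwn, h3, h4, ← ENNReal.rpow_natCast (e ^ ((n : ℝ) * γ)) k,
              ← ENNReal.rpow_natCast (e ^ (-(n : ℝ) / 2)) k,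
              ← ENNReal.rpow_mul, ← ENNReal.rpow_mul,
              ENNReal.rpow_add _ _ he0 heT, ENNReal.rpow_add _ _ he0 heT]
            ring
    calc (∫⁻ ω, (F n ω) ^ k ∂P) ^ (1 / (k : ℝ))
        ≤ (e ^ ((n : ℝ) * γ * k + n + (-(n : ℝ) / 2) * k) * D0) ^ (1 / (k : ℝ)) := by
          exact ENNReal.rpow_le_rpow hInt (by positivity)
      _ = e ^ (((n : ℝ) * γ * k + n + (-(n : ℝ) / 2) * k) * (1 / (k : ℝ))) *
            D0 ^ (1 / (k : ℝ)) := by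
          rw [ENNReal.mul_rpow_of_nonneg _ _ (by positivity), ← ENNReal.rpow_mul]
      _ ≤ e ^ (-(δ * n)) * D0 ^ (1 / (k : ℝ)) := by
          gcongr
          · have hexp : ((n : ℝ) * γ * k + n + (-(n : ℝ) / 2) * k) * (1 / (k : ℝ)) =
                -(n : ℝ) * (1 / 2 - γ - 1 / (k : ℝ)) := by
              field_simp
              ring
            rw [hexp]
            have hn0 : (0 : ℝ) ≤ (n : ℝ) := Nat.cast_nonneg n
            nlinarith
      _ = D0 ^ (1 / (k : ℝ)) * (e ^ (-δ)) ^ n := by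
          rw [mul_comm]
          congr 1
          rw [← ENNReal.rpow_natCast (e ^ (-δ)) n, ← ENNReal.rpow_mul]
          congr 1
          ring
  -- step 4 : sum the geometric series
  have hgeo : ∑' n : ℕ, (∫⁻ ω, (F n ω) ^ k ∂P) ^ (1 / (k : ℝ)) ≤
      D0 ^ (1 / (k : ℝ)) * ENNReal.ofReal ((1 - r)⁻¹) := by
    calc ∑' n : ℕ, (∫⁻ ω, (F n ω) ^ k ∂P) ^ (1 / (k : ℝ))
        ≤ ∑' n : ℕ, D0 ^ (1 / (k : ℝ)) * (e ^ (-δ)) ^ n := ENNReal.tsum_le_tsum hstep3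
      _ = D0 ^ (1 / (k : ℝ)) * (1 - e ^ (-δ))⁻¹ := by
          rw [ENNReal.tsum_mul_left, ENNReal.tsum_geometric]
      _ = D0 ^ (1 / (k : ℝ)) * ENNReal.ofReal ((1 - r)⁻¹) := by
          congr 1
          have h1 : e ^ (-δ) = ENNReal.ofReal r := by
            rw [hr, ← hofe, ENNReal.ofReal_rpow_of_pos two_pos]
          rw [h1, ← ENNReal.ofReal_one, ← ENNReal.ofReal_sub _ hr0.le,
            ← ENNReal.ofReal_inv_of_pos (by linarith)]
  -- assemble
  have hmain : ∫⁻ ω, (holderSeminorm γ fun t => B t ω) ^ k ∂P ≤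
      (4 * ENNReal.ofReal ((1 - r)⁻¹)) ^ k * D0 := by
    calc ∫⁻ ω, (holderSeminorm γ fun t => B t ω) ^ k ∂P
        ≤ 4 ^ k * ∫⁻ ω, (∑' n, F n ω) ^ k ∂P := hstep1
      _ ≤ 4 ^ k * (∑' n, (∫⁻ ω, (F n ω) ^ k ∂P) ^ (1 / (k : ℝ))) ^ k := by gcongr
      _ ≤ 4 ^ k * (D0 ^ (1 / (k : ℝ)) * ENNReal.ofReal ((1 - r)⁻¹)) ^ k :=
          mul_le_mul_right (pow_le_pow_left' hgeo k) _
      _ = (4 * ENNReal.ofReal ((1 - r)⁻¹)) ^ k * D0 := by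
          rw [mul_pow, mul_pow]
          have hcancel : (D0 ^ (1 / (k : ℝ))) ^ k = D0 := by
            rw [← ENNReal.rpow_natCast (D0 ^ (1 / (k : ℝ))) k, ← ENNReal.rpow_mul,
              one_div, inv_mul_cancel₀ hk0, ENNReal.rpow_one]
          rw [hcancel]
          ring
  refine hmain.trans ?_
  -- final constant comparison
  have hXnn : (0 : ℝ) ≤ (2 ^ (1 + γ) * C) ^ k :=
    pow_nonneg (mul_nonneg (Real.rpow_nonneg (by norm_num) _) hC0.le) k
  have hrhs : ENNReal.ofReal (2 * (2 ^ (1 + γ) * C) ^ k * ((k - 1)‼ : ℝ)) =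
      ENNReal.ofReal 2 * ENNReal.ofReal ((2 ^ (1 + γ) * C) ^ k) * D0 := by
    rw [ENNReal.ofReal_mul (mul_nonneg (by norm_num) hXnn),
      ENNReal.ofReal_mul (by norm_num : (0 : ℝ) ≤ 2)]
  rw [hrhs]
  have hfinal : (4 * ENNReal.ofReal ((1 - r)⁻¹)) ^ k ≤
      ENNReal.ofReal ((2 ^ (1 + γ) * C) ^ k) := by
    rw [ENNReal.ofReal_pow (mul_nonneg (Real.rpow_nonneg (by norm_num) _) hC0.le)]
    apply pow_le_pow_left'
    have h4 : (4 : ℝ≥0∞) * ENNReal.ofReal ((1 - r)⁻¹) =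
        ENNReal.ofReal (4 * (1 - r)⁻¹) := by
      rw [ENNReal.ofReal_mul (by norm_num)]
      norm_num
    rw [h4]
    apply ENNReal.ofReal_le_ofReal
    have h2γ : (2 : ℝ) ≤ 2 ^ (1 + γ) := by
      calc (2 : ℝ) = 2 ^ (1 : ℝ) := (Real.rpow_one 2).symm
        _ ≤ 2 ^ (1 + γ) := Real.rpow_le_rpow_of_exponent_le one_le_two (by linarith)
    have hinv0 : 0 < (1 - r)⁻¹ := inv_pos.mpr (by linarith)
    rw [hC]
    nlinarith
  calc (4 * ENNReal.ofReal ((1 - r)⁻¹)) ^ k * D0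
      ≤ ENNReal.ofReal ((2 ^ (1 + γ) * C) ^ k) * D0 := by gcongr
    _ ≤ ENNReal.ofReal 2 * ENNReal.ofReal ((2 ^ (1 + γ) * C) ^ k) * D0 := by
        rw [mul_assoc]
        apply le_mul_of_one_le_left zero_le
        exact ENNReal.one_le_ofReal.mpr (by norm_num)
end
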